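/- arXiv:0911.1828 — 3 statements merged into one kernel-verified Lean document; each statement's English description precedes it below -/
import Mathlib

section
/- Let Γ be a distance-regular graph. For any completely regular code C in Γ with characteristic vector x, the outer distribution module 𝔸x of C is closed under entrywise (Hadamard) multiplication of vectors. -/
open Finset Matrix

variable {V : Type*}

/-- `G` is a distance-regular graph with valency `k`, diameter `D`,
and intersection numbers `b i`, `c i`. -/
def IsDRG [Fintype V] (G : SimpleGraph V) [DecidableRel G.Adj]
    (k D : ℕ) (b c : ℕ → ℕ) : Prop :=
  G.Connected ∧ (∀ v, G.degree v = k) ∧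
    (∀ x y : V, G.dist x y ≤ D) ∧ (∃ x y : V, G.dist x y = D) ∧
    ∀ i ≤ D, ∀ x y : V, G.dist x y = i →
      ((Finset.univ.filter fun z => G.Adj y z ∧ G.dist x z = i - 1).card = c i ∧
       (Finset.univ.filter fun z => G.Adj y z ∧ G.dist x z = i + 1).card = b i)

/-- the distance from a vertex `v` to the code `C` -/
noncomputable def codeDist (G : SimpleGraph V) (C : Finset V) (v : V) : ℕ :=
  sInf {n | ∃ y ∈ C, G.dist v y = n}

/-- the characteristic vector of a code -/
def charVec [DecidableEq V] (C : Finset V) : V → ℂ :=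
  fun v => if v ∈ C then 1 else 0

/-- the characteristic vector of the `i`-th cell `C_i` of the distance partition -/
noncomputable def cellVec (G : SimpleGraph V) (C : Finset V) (i : ℕ) : V → ℂ :=
  fun v => if codeDist G C v = i then 1 else 0

/-- the `i`-th cell `C_i` of the distance partition, as a finset -/
noncomputable def cellFinset [Fintype V] (G : SimpleGraph V) (C : Finset V) (i : ℕ) : Finset V :=
  Finset.univ.filter fun v => codeDist G C v = i

/-- the number of neighbours of `v` lying in the `j`-th cell `C_j` -/
noncomputable def nbrsInCell [Fintype V] (G : SimpleGraph V) [DecidableRel G.Adj]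
    (C : Finset V) (j : ℕ) (v : V) : ℕ :=
  (Finset.univ.filter fun z => G.Adj v z ∧ codeDist G C z = j).card

/-- `C` is a completely regular code with covering radius `ρ` and
intersection numbers `γ i, α i, β i`. -/
def IsCRC [Fintype V] (G : SimpleGraph V) [DecidableRel G.Adj]
    (C : Finset V) (ρ : ℕ) (γ α β : ℕ → ℕ) : Prop :=
  C.Nonempty ∧ (∀ v, codeDist G C v ≤ ρ) ∧ (∃ v, codeDist G C v = ρ) ∧
    (∀ i, 1 ≤ i → i ≤ ρ → ∀ v, codeDist G C v = i → nbrsInCell G C (i - 1) v = γ i) ∧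
    (∀ i ≤ ρ, ∀ v, codeDist G C v = i → nbrsInCell G C i v = α i) ∧
    (∀ i ≤ ρ, ∀ v, codeDist G C v = i → nbrsInCell G C (i + 1) v = β i)

/-- the outer distribution module `𝔸x` of the code `C`, where `𝔸` is the
Bose-Mesner algebra (the algebra generated by the adjacency matrix) -/
noncomputable def outerModule [Fintype V] [DecidableEq V] (G : SimpleGraph V)
    [DecidableRel G.Adj] (C : Finset V) : Submodule ℂ (V → ℂ) :=
  Submodule.span ℂ {w | ∃ M ∈ Algebra.adjoin ℂ {G.adjMatrix ℂ}, w = M *ᵥ charVec C}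

/-- the tridiagonal quotient matrix `U` of a completely regular code -/
def quotientMatrix (F : Type*) [Semiring F] (γ α β : ℕ → ℕ) (ρ : ℕ) :
    Matrix (Fin (ρ + 1)) (Fin (ρ + 1)) F :=
  Matrix.of fun i j =>
    if (i : ℕ) = (j : ℕ) + 1 then (γ (i : ℕ) : F)
    else if (i : ℕ) = (j : ℕ) then (α (i : ℕ) : F)
    else if (j : ℕ) = (i : ℕ) + 1 then (β (i : ℕ) : F)
    else 0

/-- `θ` lists the distinct eigenvalues of `A` and `E j` is the orthogonal
projection onto the eigenspace of `θ j` (the primitive idempotents). -/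
def PrimIdem [Fintype V] [DecidableEq V] (A : Matrix V V ℂ) (D : ℕ)
    (θ : Fin (D + 1) → ℝ) (E : Fin (D + 1) → Matrix V V ℂ) : Prop :=
  Function.Injective θ ∧ (∀ j, E j * E j = E j) ∧ (∀ j, (E j)ᴴ = E j) ∧
    (∀ j, A * E j = (θ j : ℂ) • E j) ∧ (∑ j, E j = 1) ∧ (∀ j, E j ≠ 0)

/-- `q` are the Krein parameters of the primitive idempotents `E`. -/
def KreinRel [Fintype V] (D : ℕ) (E : Fin (D + 1) → Matrix V V ℂ)
    (q : Fin (D + 1) → Fin (D + 1) → Fin (D + 1) → ℝ) : Prop :=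
  ∀ i j, Matrix.hadamard (E i) (E j) = (Fintype.card V : ℂ)⁻¹ • ∑ l, (q i j l : ℂ) • E l

/-- the Krein parameters satisfy the `Q`-polynomial condition with respect to the
given ordering of the primitive idempotents -/
def QPolyKrein (D : ℕ) (q : Fin (D + 1) → Fin (D + 1) → Fin (D + 1) → ℝ) : Prop :=
  ∀ i j l : Fin (D + 1),
    (¬(((i : ℤ) - (j : ℤ)).natAbs ≤ (l : ℕ) ∧ (l : ℕ) ≤ (i : ℕ) + (j : ℕ)) → q i j l = 0) ∧
    (((l : ℕ) = ((i : ℤ) - (j : ℤ)).natAbs ∨ (l : ℕ) = (i : ℕ) + (j : ℕ)) → q i j l ≠ 0)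

/-- a matrix is irreducible tridiagonal if all entries at distance more than one from
the diagonal vanish and all sub- and super-diagonal entries are nonzero -/
def IrredTridiag {n : ℕ} {F : Type*} [Zero F] (M : Matrix (Fin n) (Fin n) F) : Prop :=
  (∀ i j : Fin n, 1 < (((i : ℕ) : ℤ) - ((j : ℕ) : ℤ)).natAbs → M i j = 0) ∧
  (∀ i j : Fin n, (((i : ℕ) : ℤ) - ((j : ℕ) : ℤ)).natAbs = 1 → M i j ≠ 0)

/-- `C` is a Leonard completely regular code with respect to the (nontrivial)
eigenvalue `θ t`: for some ordering `σ` of the basis `ℬ = {E_j x ≠ 0}` of the outer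
distribution module, the matrix representing `y ↦ (E t x) ∘ y` is irreducible
tridiagonal. -/
def IsLeonardWrt [Fintype V] [DecidableEq V] (D ρ : ℕ)
    (E : Fin (D + 1) → Matrix V V ℂ) (C : Finset V) (t : Fin (D + 1)) : Prop :=
  E t *ᵥ charVec C ≠ 0 ∧
    ∃ σ : Fin (ρ + 1) → Fin (D + 1), Function.Injective σ ∧
      (∀ j : Fin (D + 1), E j *ᵥ charVec C ≠ 0 ↔ j ∈ Set.range σ) ∧
      ∃ M : Matrix (Fin (ρ + 1)) (Fin (ρ + 1)) ℂ, IrredTridiag M ∧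
        ∀ j, (E t *ᵥ charVec C) * (E (σ j) *ᵥ charVec C) =
          ∑ l, M l j • (E (σ l) *ᵥ charVec C)

/-- `C` is a Leonard completely regular code: it is Leonard with respect to some
nontrivial eigenvalue. -/
def IsLeonard [Fintype V] [DecidableEq V] (D ρ : ℕ)
    (E : Fin (D + 1) → Matrix V V ℂ) (C : Finset V) : Prop :=
  ∃ t : Fin (D + 1), t ≠ 0 ∧ IsLeonardWrt D ρ E C t

/-- `C` is a `Q`-polynomial completely regular code with respect to the eigenvalue
`θ t`: there is an ordering `Spec C = {θ 0, θ (σ 1), …, θ (σ ρ)}` with `σ 1 = t`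
such that the entrywise `p`-th power of `u = E t x` lies in
`V_{σ 0} + ⋯ + V_{σ p}` for all `0 ≤ p ≤ ρ`. -/
def IsQPolyCodeWrt [Fintype V] [DecidableEq V] (G : SimpleGraph V) [DecidableRel G.Adj]
    (D ρ : ℕ) (θ : Fin (D + 1) → ℝ) (E : Fin (D + 1) → Matrix V V ℂ)
    (γ α β : ℕ → ℕ) (C : Finset V) (t : Fin (D + 1)) : Prop :=
  ∃ σ : Fin (ρ + 1) → Fin (D + 1), σ 0 = 0 ∧ Function.Injective σ ∧ σ 1 = t ∧
    spectrum ℂ (quotientMatrix ℂ γ α β ρ) = Set.range (fun j => (θ (σ j) : ℂ)) ∧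
    ∀ p : Fin (ρ + 1), (fun v => (E t *ᵥ charVec C) v ^ (p : ℕ)) ∈
      ⨆ (j : Fin (ρ + 1)) (_ : j ≤ p),
        Module.End.eigenspace (Matrix.mulVecLin (G.adjMatrix ℂ)) ((θ (σ j) : ℂ))

/-- `C` is a `Q`-polynomial completely regular code. -/
def IsQPolyCode [Fintype V] [DecidableEq V] (G : SimpleGraph V) [DecidableRel G.Adj]
    (D ρ : ℕ) (θ : Fin (D + 1) → ℝ) (E : Fin (D + 1) → Matrix V V ℂ)
    (γ α β : ℕ → ℕ) (C : Finset V) : Prop :=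
  ∃ t : Fin (D + 1), IsQPolyCodeWrt G D ρ θ E γ α β C t

/-- a translation graph on an abelian group: adjacency is invariant under translation -/
def IsTranslationGraph {X : Type*} [AddCommGroup X] (G : SimpleGraph X) : Prop :=
  ∀ x y z : X, G.Adj x y → G.Adj (x + z) (y + z)

/-- the coset graph of an additive code `C`: cosets `C'` and `C''` are adjacent if
`Γ` has an edge with one end in `C'` and the other in `C''` -/
def cosetGraph {X : Type*} [AddCommGroup X] (G : SimpleGraph X) (C : AddSubgroup X) :
    SimpleGraph (X ⧸ C) where
  Adj a b := a ≠ b ∧ ∃ x y : X,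
    QuotientAddGroup.mk x = a ∧ QuotientAddGroup.mk y = b ∧ G.Adj x y
  symm := ⟨fun a b ⟨hne, x, y, hx, hy, h⟩ => ⟨hne.symm, y, x, hy, hx, h.symm⟩⟩
  loopless := ⟨fun a ⟨hne, _⟩ => hne rfl⟩

/-- `G` is a `Q`-polynomial distance-regular graph: it is distance-regular and
admits an ordering of its primitive idempotents whose Krein parameters satisfy
the `Q`-polynomial condition -/
def IsQPolyDRG {W : Type*} [Fintype W] [DecidableEq W]
    (G : SimpleGraph W) [DecidableRel G.Adj] : Prop :=
  ∃ (k D : ℕ) (b c : ℕ → ℕ), IsDRG G k D b c ∧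
    ∃ (θ : Fin (D + 1) → ℝ) (E : Fin (D + 1) → Matrix W W ℂ)
      (q : Fin (D + 1) → Fin (D + 1) → Fin (D + 1) → ℝ),
      θ 0 = k ∧ PrimIdem (G.adjMatrix ℂ) D θ E ∧ KreinRel D E q ∧ QPolyKrein D q


section Aux

variable (G : SimpleGraph V) (C : Finset V)

lemma exists_codeDist (hC : C.Nonempty) (v : V) :
    ∃ y ∈ C, G.dist v y = codeDist G C v := by
  obtain ⟨y, hy⟩ := hC
  have hne : {n | ∃ y ∈ C, G.dist v y = n}.Nonempty := ⟨G.dist v y, y, hy, rfl⟩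
  exact Nat.sInf_mem hne

lemma codeDist_le {y : V} (hy : y ∈ C) (v : V) : codeDist G C v ≤ G.dist v y :=
  Nat.sInf_le ⟨y, hy, rfl⟩

lemma codeDist_eq_zero_iff (hconn : G.Connected) (hC : C.Nonempty) (v : V) :
    codeDist G C v = 0 ↔ v ∈ C := by
  constructor
  · intro h
    obtain ⟨y, hy, hd⟩ := exists_codeDist G C hC v
    rw [h] at hd
    rwa [(hconn.dist_eq_zero_iff).mp hd]
  · intro h
    have := codeDist_le G C h v
    rw [SimpleGraph.dist_self] at this
    omega

lemma codeDist_adj_le (hconn : G.Connected) (hC : C.Nonempty) {u v : V} (h : G.Adj u v) :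
    codeDist G C u ≤ codeDist G C v + 1 := by
  obtain ⟨y, hy, hd⟩ := exists_codeDist G C hC v
  calc codeDist G C u ≤ G.dist u y := codeDist_le G C hy u
    _ ≤ G.dist u v + G.dist v y := hconn.dist_triangle
    _ = codeDist G C v + 1 := by
        rw [SimpleGraph.dist_eq_one_iff_adj.mpr h, hd]; omega

lemma exists_adj_codeDist_pred (hconn : G.Connected) (hC : C.Nonempty) {v : V}
    (hv : codeDist G C v ≠ 0) :
    ∃ u, G.Adj v u ∧ codeDist G C u = codeDist G C v - 1 := by
  obtain ⟨y, hy, hd⟩ := exists_codeDist G C hC v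
  obtain ⟨p, hp⟩ := hconn.exists_walk_length_eq_dist v y
  cases p with
  | nil => exact absurd (hd ▸ hp.symm) hv
  | @cons _ u _ hadj q =>
    refine ⟨u, hadj, ?_⟩
    have h1 : codeDist G C u ≤ G.dist u y := codeDist_le G C hy u
    have h2 : G.dist u y ≤ q.length := SimpleGraph.dist_le q
    have h3 : (SimpleGraph.Walk.cons hadj q).length = q.length + 1 :=
      SimpleGraph.Walk.length_cons _ _
    have h4 : codeDist G C v ≤ codeDist G C u + 1 :=
      codeDist_adj_le G C hconn hC hadj
    omega

lemma cell_nonempty (hconn : G.Connected) (hC : C.Nonempty) {ρ : ℕ}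
    (hmax : ∃ v, codeDist G C v = ρ) {i : ℕ} (hi : i ≤ ρ) :
    ∃ v, codeDist G C v = i := by
  obtain ⟨v, hv⟩ := hmax
  have key : ∀ j, ∃ w, codeDist G C w = ρ - j := by
    intro j
    induction j with
    | zero => exact ⟨v, by omega⟩
    | succ n ih =>
      obtain ⟨w, hw⟩ := ih
      by_cases h0 : ρ - n = 0
      · exact ⟨w, by omega⟩
      · obtain ⟨u, _, hu⟩ :=
          exists_adj_codeDist_pred G C hconn hC (v := w) (by omega)
        exact ⟨u, by omega⟩
  obtain ⟨w, hw⟩ := key (ρ - i)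
  exact ⟨w, by omega⟩

lemma gamma_pos [Fintype V] [DecidableRel G.Adj] {ρ : ℕ} {γ α β : ℕ → ℕ}
    (hconn : G.Connected) (hcrc : IsCRC G C ρ γ α β) {i : ℕ}
    (h1 : 1 ≤ i) (hi : i ≤ ρ) : γ i ≠ 0 := by
  obtain ⟨hCne, hle, hmax, hγ, hα, hβ⟩ := hcrc
  obtain ⟨v, hv⟩ := cell_nonempty G C hconn hCne hmax hi
  obtain ⟨u, hadj, hu⟩ := exists_adj_codeDist_pred G C hconn hCne (v := v) (by omega)
  have hmem : u ∈ Finset.univ.filter fun z => G.Adj v z ∧ codeDist G C z = i - 1 := by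
    simp [hadj, hu, hv]
  have hpos : 0 < nbrsInCell G C (i - 1) v :=
    Finset.card_pos.mpr ⟨u, hmem⟩
  have := hγ i h1 hi v hv
  omega

lemma cellVec_eq_zero_of_gt {ρ : ℕ} (hle : ∀ v, codeDist G C v ≤ ρ) {i : ℕ}
    (hi : ρ < i) : cellVec G C i = 0 := by
  funext v
  have := hle v
  simp only [cellVec, Pi.zero_apply, ite_eq_right_iff]
  intro h; omega

lemma charVec_eq_cellVec_zero [DecidableEq V] (hconn : G.Connected) (hC : C.Nonempty) :
    charVec C = cellVec G C 0 := by
  funext v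
  simp [charVec, cellVec, codeDist_eq_zero_iff G C hconn hC v]

variable [Fintype V] [DecidableRel G.Adj]

lemma adjMatrix_mulVec_cellVec (j : ℕ) (v : V) :
    (G.adjMatrix ℂ *ᵥ cellVec G C j) v = (nbrsInCell G C j v : ℂ) := by
  rw [SimpleGraph.adjMatrix_mulVec_apply]
  unfold cellVec nbrsInCell
  rw [Finset.sum_boole]
  congr 1
  apply Finset.card_nbij id
  · intro z hz
    simp only [Finset.mem_coe, Finset.mem_filter, SimpleGraph.mem_neighborFinset] at hz ⊢
    exact ⟨Finset.mem_univ _, hz.1, hz.2⟩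
  · intro a _ b _ h; exact h
  · intro z hz
    simp only [Finset.mem_filter, SimpleGraph.mem_neighborFinset,
      Set.mem_image, Finset.coe_filter] at hz ⊢
    exact ⟨z, ⟨hz.2.1, hz.2.2⟩, rfl⟩

lemma nbrsInCell_eq_zero (hconn : G.Connected) (hC : C.Nonempty) {j : ℕ} {v : V}
    (h1 : codeDist G C v ≠ j) (h2 : codeDist G C v + 1 ≠ j) (h3 : codeDist G C v ≠ j + 1) :
    nbrsInCell G C j v = 0 := by
  unfold nbrsInCell
  rw [Finset.card_eq_zero, Finset.filter_eq_empty_iff]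
  rintro z - ⟨hadj, hz⟩
  have ha := codeDist_adj_le G C hconn hC hadj
  have hb := codeDist_adj_le G C hconn hC hadj.symm
  omega

lemma mulVec_cellVec_zero {ρ : ℕ} {γ α β : ℕ → ℕ} (hconn : G.Connected)
    (hcrc : IsCRC G C ρ γ α β) :
    G.adjMatrix ℂ *ᵥ cellVec G C 0 =
      (α 0 : ℂ) • cellVec G C 0 + (γ 1 : ℂ) • cellVec G C 1 := by
  obtain ⟨hCne, hle, hmax, hγ, hα, hβ⟩ := hcrc
  funext v
  simp only [Pi.add_apply, Pi.smul_apply, smul_eq_mul]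
  rw [adjMatrix_mulVec_cellVec]
  unfold cellVec
  by_cases h0 : codeDist G C v = 0
  · rw [hα 0 (Nat.zero_le _) v h0]
    simp [h0]
  · by_cases h1 : codeDist G C v = 1
    · have := hγ 1 le_rfl (h1 ▸ hle v) v h1
      simp only [Nat.sub_self] at this
      rw [this]
      simp [h1]
    · rw [nbrsInCell_eq_zero G C hconn hCne h0 (by omega) (by omega)]
      simp [h0, h1]

lemma mulVec_cellVec_succ {ρ : ℕ} {γ α β : ℕ → ℕ} (hconn : G.Connected)
    (hcrc : IsCRC G C ρ γ α β) (i : ℕ) :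
    G.adjMatrix ℂ *ᵥ cellVec G C (i + 1) =
      (β i : ℂ) • cellVec G C i + (α (i + 1) : ℂ) • cellVec G C (i + 1)
        + (γ (i + 2) : ℂ) • cellVec G C (i + 2) := by
  obtain ⟨hCne, hle, hmax, hγ, hα, hβ⟩ := hcrc
  funext v
  simp only [Pi.add_apply, Pi.smul_apply, smul_eq_mul]
  rw [adjMatrix_mulVec_cellVec]
  unfold cellVec
  by_cases h0 : codeDist G C v = i
  · rw [hβ i (h0 ▸ hle v) v h0]
    simp [h0]
  · by_cases h1 : codeDist G C v = i + 1
    · rw [hα (i + 1) (h1 ▸ hle v) v h1]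
      simp only [h1]
      norm_num
    · by_cases h2 : codeDist G C v = i + 2
      · have := hγ (i + 2) (by omega) (h2 ▸ hle v) v h2
        have h21 : i + 2 - 1 = i + 1 := by omega
        rw [h21] at this
        rw [this]
        simp only [h2]
        norm_num
      · rw [nbrsInCell_eq_zero G C hconn hCne h1 (by omega) (by omega)]
        simp [h0, h1, h2]

variable [DecidableEq V]

lemma charVec_mem_outerModule : charVec C ∈ outerModule G C :=
  Submodule.subset_span ⟨1, one_mem _, (Matrix.one_mulVec _).symm⟩

lemma outerModule_mulVec_mem {M : Matrix V V ℂ}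
    (hM : M ∈ Algebra.adjoin ℂ {G.adjMatrix ℂ}) {w : V → ℂ}
    (hw : w ∈ outerModule G C) : M *ᵥ w ∈ outerModule G C := by
  induction hw using Submodule.span_induction with
  | mem a ha =>
    obtain ⟨N, hN, rfl⟩ := ha
    exact Submodule.subset_span ⟨M * N, mul_mem hM hN, Matrix.mulVec_mulVec _ _ _⟩
  | zero => rw [Matrix.mulVec_zero]; exact zero_mem _
  | add a b _ _ ha hb => rw [Matrix.mulVec_add]; exact add_mem ha hb
  | smul c a _ ha => rw [Matrix.mulVec_smul]; exact Submodule.smul_mem _ _ ha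

lemma cellVec_mem_outerModule {ρ : ℕ} {γ α β : ℕ → ℕ} (hconn : G.Connected)
    (hcrc : IsCRC G C ρ γ α β) (i : ℕ) :
    cellVec G C i ∈ outerModule G C := by
  have hCne := hcrc.1
  have hle := hcrc.2.1
  have hA : G.adjMatrix ℂ ∈ Algebra.adjoin ℂ {G.adjMatrix ℂ} :=
    Algebra.subset_adjoin rfl
  have key : ∀ i, i ≤ ρ → cellVec G C i ∈ outerModule G C := by
    intro i
    induction i using Nat.strong_induction_on with
    | _ i ih =>
      match i with
      | 0 =>
        intro _
        rw [← charVec_eq_cellVec_zero G C hconn hCne]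
        exact charVec_mem_outerModule G C
      | 1 =>
        intro hρ
        have h0 : cellVec G C 0 ∈ outerModule G C := ih 0 (by omega) (by omega)
        have hγ1 : (γ 1 : ℂ) ≠ 0 :=
          Nat.cast_ne_zero.mpr (gamma_pos G C hconn hcrc le_rfl hρ)
        have hid := mulVec_cellVec_zero G C hconn hcrc
        have hmem : (γ 1 : ℂ) • cellVec G C 1 ∈ outerModule G C := by
          have heq : (γ 1 : ℂ) • cellVec G C 1 =
              G.adjMatrix ℂ *ᵥ cellVec G C 0 - (α 0 : ℂ) • cellVec G C 0 := by
            rw [hid]; abel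
          rw [heq]
          exact sub_mem (outerModule_mulVec_mem G C hA h0) (Submodule.smul_mem _ _ h0)
        rw [← inv_smul_smul₀ hγ1 (cellVec G C 1)]
        exact Submodule.smul_mem _ _ hmem
      | (m + 2) =>
        intro hρ
        have hm : cellVec G C m ∈ outerModule G C := ih m (by omega) (by omega)
        have hm1 : cellVec G C (m + 1) ∈ outerModule G C := ih (m + 1) (by omega) (by omega)
        have hγ2 : (γ (m + 2) : ℂ) ≠ 0 :=
          Nat.cast_ne_zero.mpr (gamma_pos G C hconn hcrc (by omega) hρ)
        have hid := mulVec_cellVec_succ G C hconn hcrc m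
        have hmem : (γ (m + 2) : ℂ) • cellVec G C (m + 2) ∈ outerModule G C := by
          have heq : (γ (m + 2) : ℂ) • cellVec G C (m + 2) =
              G.adjMatrix ℂ *ᵥ cellVec G C (m + 1) - (β m : ℂ) • cellVec G C m
                - (α (m + 1) : ℂ) • cellVec G C (m + 1) := by
            rw [hid]; abel
          rw [heq]
          exact sub_mem (sub_mem (outerModule_mulVec_mem G C hA hm1)
            (Submodule.smul_mem _ _ hm)) (Submodule.smul_mem _ _ hm1)
        rw [← inv_smul_smul₀ hγ2 (cellVec G C (m + 2))]
        exact Submodule.smul_mem _ _ hmem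
  by_cases hi : i ≤ ρ
  · exact key i hi
  · rw [cellVec_eq_zero_of_gt G C hle (by omega)]
    exact zero_mem _

lemma cellVec_mem_span {ρ : ℕ} (hle : ∀ v, codeDist G C v ≤ ρ) (i : ℕ) :
    cellVec G C i ∈
      Submodule.span ℂ (Set.range fun j : Fin (ρ + 1) => cellVec G C (j : ℕ)) := by
  by_cases hi : i ≤ ρ
  · exact Submodule.subset_span ⟨⟨i, by omega⟩, rfl⟩
  · rw [cellVec_eq_zero_of_gt G C hle (by omega)]
    exact zero_mem _

lemma adjMatrix_mulVec_mem_span {ρ : ℕ} {γ α β : ℕ → ℕ} (hconn : G.Connected)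
    (hcrc : IsCRC G C ρ γ α β) {w : V → ℂ}
    (hw : w ∈ Submodule.span ℂ (Set.range fun j : Fin (ρ + 1) => cellVec G C (j : ℕ))) :
    G.adjMatrix ℂ *ᵥ w ∈
      Submodule.span ℂ (Set.range fun j : Fin (ρ + 1) => cellVec G C (j : ℕ)) := by
  have hle := hcrc.2.1
  induction hw using Submodule.span_induction with
  | mem a ha =>
    obtain ⟨j, rfl⟩ := ha
    show G.adjMatrix ℂ *ᵥ cellVec G C (j : ℕ) ∈ _
    rcases hn : (j : ℕ) with _ | m
    · rw [mulVec_cellVec_zero G C hconn hcrc]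
      exact add_mem (Submodule.smul_mem _ _ (cellVec_mem_span G C hle 0))
        (Submodule.smul_mem _ _ (cellVec_mem_span G C hle 1))
    · rw [mulVec_cellVec_succ G C hconn hcrc m]
      exact add_mem (add_mem
        (Submodule.smul_mem _ _ (cellVec_mem_span G C hle m))
        (Submodule.smul_mem _ _ (cellVec_mem_span G C hle (m + 1))))
        (Submodule.smul_mem _ _ (cellVec_mem_span G C hle (m + 2)))
  | zero => rw [Matrix.mulVec_zero]; exact zero_mem _
  | add a b _ _ ha hb => rw [Matrix.mulVec_add]; exact add_mem ha hb
  | smul c a _ ha => rw [Matrix.mulVec_smul]; exact Submodule.smul_mem _ _ ha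

lemma adjoin_mulVec_mem_span {ρ : ℕ} {γ α β : ℕ → ℕ} (hconn : G.Connected)
    (hcrc : IsCRC G C ρ γ α β) {M : Matrix V V ℂ}
    (hM : M ∈ Algebra.adjoin ℂ {G.adjMatrix ℂ}) :
    ∀ w ∈ Submodule.span ℂ (Set.range fun j : Fin (ρ + 1) => cellVec G C (j : ℕ)),
      M *ᵥ w ∈
        Submodule.span ℂ (Set.range fun j : Fin (ρ + 1) => cellVec G C (j : ℕ)) := by
  induction hM using Algebra.adjoin_induction with
  | mem a ha =>
    rw [Set.mem_singleton_iff] at ha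
    subst ha
    exact fun w hw => adjMatrix_mulVec_mem_span G C hconn hcrc hw
  | algebraMap c =>
    intro w hw
    have : (algebraMap ℂ (Matrix V V ℂ) c) *ᵥ w = c • w := by
      rw [Algebra.algebraMap_eq_smul_one, Matrix.smul_mulVec, Matrix.one_mulVec]
    rw [this]
    exact Submodule.smul_mem _ _ hw
  | add a b _ _ ha hb =>
    intro w hw
    rw [Matrix.add_mulVec]
    exact add_mem (ha w hw) (hb w hw)
  | mul a b _ _ ha hb =>
    intro w hw
    rw [← Matrix.mulVec_mulVec]
    exact ha _ (hb w hw)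

lemma outerModule_le_span {ρ : ℕ} {γ α β : ℕ → ℕ} (hconn : G.Connected)
    (hcrc : IsCRC G C ρ γ α β) :
    outerModule G C ≤
      Submodule.span ℂ (Set.range fun j : Fin (ρ + 1) => cellVec G C (j : ℕ)) := by
  apply Submodule.span_le.mpr
  rintro w ⟨M, hM, rfl⟩
  apply adjoin_mulVec_mem_span G C hconn hcrc hM
  rw [charVec_eq_cellVec_zero G C hconn hcrc.1]
  exact cellVec_mem_span G C hcrc.2.1 0

lemma cellVec_mul_cellVec (i j : ℕ) :
    cellVec G C i * cellVec G C j = if i = j then cellVec G C i else 0 := by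
  funext v
  rw [Pi.mul_apply]
  by_cases h : i = j
  · subst h
    rw [if_pos rfl]
    unfold cellVec
    by_cases h1 : codeDist G C v = i <;> simp [h1]
  · rw [if_neg h, Pi.zero_apply]
    unfold cellVec
    by_cases h1 : codeDist G C v = i <;> by_cases h2 : codeDist G C v = j
    · exact absurd (by omega : i = j) h
    · simp [h1, h2]; omega
    · simp [h1, h2]; omega
    · simp [h1, h2]

end Aux

theorem stmt3 {V : Type*} [Fintype V] [DecidableEq V]
    (G : SimpleGraph V) [DecidableRel G.Adj] (k D : ℕ) (b c : ℕ → ℕ)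
    (hG : IsDRG G k D b c)
    (C : Finset V) (ρ : ℕ) (γ α β : ℕ → ℕ)
    (hC : IsCRC G C ρ γ α β) :
    ∀ u v : V → ℂ, u ∈ outerModule G C → v ∈ outerModule G C →
      u * v ∈ outerModule G C := by
  intro u v hu hv
  have hconn := hG.1
  have hu' := outerModule_le_span G C hconn hC hu
  have hv' := outerModule_le_span G C hconn hC hv
  clear hu hv
  induction hu' using Submodule.span_induction with
  | mem a ha =>
    induction hv' using Submodule.span_induction with
    | mem b hb =>
      obtain ⟨i, rfl⟩ := ha
      obtain ⟨j, rfl⟩ := hb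
      rw [cellVec_mul_cellVec]
      split_ifs
      · exact cellVec_mem_outerModule G C hconn hC _
      · exact zero_mem _
    | zero => rw [mul_zero]; exact zero_mem _
    | add b c _ _ h1 h2 => rw [mul_add]; exact add_mem h1 h2
    | smul r b _ h1 => rw [mul_smul_comm]; exact Submodule.smul_mem _ _ h1
  | zero => rw [zero_mul]; exact zero_mem _
  | add a b _ _ h1 h2 => rw [add_mul]; exact add_mem h1 h2
  | smul r a _ h1 => rw [smul_mul_assoc]; exact Submodule.smul_mem _ _ h1
end

section
/- Assume Γ is a distance-regular graph that is Q-polynomial with respect to the ordering θ_0 = k, θ_1, …, θ_D of its eigenvalues. Let C be a completely regular code with covering radius ρ and Spec*(C) = {θ_{i_1}, θ_{i_2}, …, θ_{i_ρ}} where i_1 < i_2 < ⋯ < i_ρ. Let u(θ_{i_1}) be the eigenvector with eigenvalue θ_{i_1} belonging to C. If u(θ_{i_1}) has ρ + 1 different entries, then i_j − i_{j−1} ≤ i_1 for all j ∈ {1, …, ρ} (with i_0 = 0). -/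
open Finset Matrix

variable {V : Type*}

set_option linter.unusedSectionVars false
set_option maxHeartbeats 2000000

namespace St7
variable {V : Type*} [Fintype V] [DecidableEq V]

/-! ### basic matrix helpers -/

lemma sum_mulVec {ι : Type*} (s : Finset ι) (M : ι → Matrix V V ℂ) (v : V → ℂ) :
    (∑ i ∈ s, M i) *ᵥ v = ∑ i ∈ s, M i *ᵥ v := by
  ext x
  simp only [Matrix.mulVec, dotProduct, Finset.sum_apply,
    Finset.sum_apply', Matrix.sum_apply, Finset.sum_mul]
  rw [Finset.sum_comm]

lemma mulVec_apply' (M : Matrix V V ℂ) (v : V → ℂ) (x : V) :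
    (M *ᵥ v) x = ∑ y, M x y * v y := rfl

lemma adj_conjTranspose (G : SimpleGraph V) [DecidableRel G.Adj] :
    (G.adjMatrix ℂ)ᴴ = G.adjMatrix ℂ := by
  ext x y
  simp only [Matrix.conjTranspose_apply, SimpleGraph.adjMatrix_apply, G.adj_comm x y]
  split_ifs <;> simp

lemma EA_comm {A M : Matrix V V ℂ} (hA : Aᴴ = A) (hM : Mᴴ = M) {t : ℝ}
    (h : A * M = (t : ℂ) • M) : M * A = (t : ℂ) • M := by
  have := congrArg Matrix.conjTranspose h
  rwa [Matrix.conjTranspose_mul, hA, hM, Matrix.conjTranspose_smul, hM,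
    Complex.star_def, Complex.conj_ofReal] at this

/-! ### spectral projections -/

lemma proj_eig {D : ℕ} {θ : Fin (D + 1) → ℝ} {E : Fin (D + 1) → Matrix V V ℂ}
    {A : Matrix V V ℂ} (hA : Aᴴ = A) (hEherm : ∀ j, (E j)ᴴ = E j)
    (hAE : ∀ j, A * E j = (θ j : ℂ) • E j)
    {w : V → ℂ} {t : ℝ} (hw : A *ᵥ w = (t : ℂ) • w) {l : Fin (D + 1)}
    (hne : θ l ≠ t) : E l *ᵥ w = 0 := by
  have h1 : E l * A = (θ l : ℂ) • E l := EA_comm hA (hEherm l) (hAE l)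
  have h2 : (θ l : ℂ) • (E l *ᵥ w) = (t : ℂ) • (E l *ᵥ w) := by
    calc (θ l : ℂ) • (E l *ᵥ w) = ((θ l : ℂ) • E l) *ᵥ w := (Matrix.smul_mulVec _ _ _).symm
      _ = (E l * A) *ᵥ w := by rw [h1]
      _ = E l *ᵥ (A *ᵥ w) := (Matrix.mulVec_mulVec _ _ _).symm
      _ = E l *ᵥ ((t : ℂ) • w) := by rw [hw]
      _ = (t : ℂ) • (E l *ᵥ w) := Matrix.mulVec_smul _ _ _
  have h3 : (((θ l : ℂ)) - (t : ℂ)) • (E l *ᵥ w) = 0 := by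
    rw [sub_smul, h2, sub_self]
  rcases smul_eq_zero.mp h3 with h | h
  · exfalso
    apply hne
    have : (θ l : ℂ) = (t : ℂ) := sub_eq_zero.mp h
    exact_mod_cast this
  · exact h

lemma decomp {D : ℕ} {E : Fin (D + 1) → Matrix V V ℂ}
    (hEsum : (∑ j, E j) = 1) (w : V → ℂ) : ∑ l, E l *ᵥ w = w := by
  rw [← sum_mulVec, hEsum, Matrix.one_mulVec]

lemma eig_self {D : ℕ} {θ : Fin (D + 1) → ℝ} {E : Fin (D + 1) → Matrix V V ℂ}
    {A : Matrix V V ℂ} (hA : Aᴴ = A) (hθinj : Function.Injective θ)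
    (hEherm : ∀ j, (E j)ᴴ = E j) (hAE : ∀ j, A * E j = (θ j : ℂ) • E j)
    (hEsum : (∑ j, E j) = 1)
    {w : V → ℂ} {t : Fin (D + 1)} (hw : A *ᵥ w = ((θ t : ℝ) : ℂ) • w) :
    E t *ᵥ w = w := by
  conv_rhs => rw [← decomp hEsum w]
  rw [Finset.sum_eq_single t]
  · intro l _ hl
    exact proj_eig hA hEherm hAE hw (fun hc => hl (hθinj hc))
  · intro h
    exact absurd (Finset.mem_univ t) h

lemma orth {D : ℕ} {θ : Fin (D + 1) → ℝ} {E : Fin (D + 1) → Matrix V V ℂ}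
    {A : Matrix V V ℂ} (hA : Aᴴ = A) (hθinj : Function.Injective θ)
    (hEherm : ∀ j, (E j)ᴴ = E j) (hAE : ∀ j, A * E j = (θ j : ℂ) • E j)
    {l m : Fin (D + 1)} (hlm : l ≠ m) : E l * E m = 0 := by
  have h1 : E l * A = (θ l : ℂ) • E l := EA_comm hA (hEherm l) (hAE l)
  have h2 : (θ l : ℂ) • (E l * E m) = (θ m : ℂ) • (E l * E m) := by
    calc (θ l : ℂ) • (E l * E m) = ((θ l : ℂ) • E l) * E m := (smul_mul_assoc _ _ _).symm
      _ = (E l * A) * E m := by rw [h1]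
      _ = E l * (A * E m) := Matrix.mul_assoc _ _ _
      _ = E l * ((θ m : ℂ) • E m) := by rw [hAE m]
      _ = (θ m : ℂ) • (E l * E m) := Matrix.mul_smul _ _ _
  have h3 : (((θ l : ℂ)) - (θ m : ℂ)) • (E l * E m) = 0 := by
    rw [sub_smul, h2, sub_self]
  have hc : ((θ l : ℂ)) - (θ m : ℂ) ≠ 0 := by
    intro hc0
    apply hlm
    apply hθinj
    have : (θ l : ℂ) = (θ m : ℂ) := sub_eq_zero.mp hc0
    exact_mod_cast this
  have h4 : ((((θ l : ℂ)) - (θ m : ℂ))⁻¹ * (((θ l : ℂ)) - (θ m : ℂ))) • (E l * E m)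
      = (0 : Matrix V V ℂ) := by
    rw [← smul_smul, h3, smul_zero]
  rwa [inv_mul_cancel₀ hc, one_smul] at h4

/-! ### the Krein vanishing lemma -/

lemma krein_vanish (Ei Ej El : Matrix V V ℂ)
    (hEi : Ei * Eiᴴ = Ei) (hEj : Ej * Ejᴴ = Ej) (hElH : Elᴴ = El) (hElI : El * El = El)
    (htr : Matrix.trace (El * (Ei.hadamard Ej)) = 0) (y z : V → ℂ) :
    El *ᵥ ((Ei *ᵥ y) * (Ej *ᵥ z)) = 0 := by
  set w : V → V → V → ℂ := fun a b x => Ei x a * Ej x b with hw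
  have hsum : (∑ a, ∑ b, Matrix.vecMulVec (w a b) (star (w a b))) = Ei.hadamard Ej := by
    ext x x'
    have keyi : (∑ a, Ei x a * star (Ei x' a)) = Ei x x' := by
      have := congrFun (congrFun hEi x) x'
      simpa [Matrix.mul_apply, Matrix.conjTranspose_apply] using this
    have keyj : (∑ b, Ej x b * star (Ej x' b)) = Ej x x' := by
      have := congrFun (congrFun hEj x) x'
      simpa [Matrix.mul_apply, Matrix.conjTranspose_apply] using this
    calc (∑ a, ∑ b, Matrix.vecMulVec (w a b) (star (w a b))) x x'
        = ∑ a, ∑ b, (Ei x a * Ej x b) * star (Ei x' a * Ej x' b) := by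
          simp [Matrix.sum_apply, Matrix.vecMulVec_apply, hw]
      _ = ∑ a, ∑ b, (Ei x a * star (Ei x' a)) * (Ej x b * star (Ej x' b)) := by
          refine Finset.sum_congr rfl fun a _ => Finset.sum_congr rfl fun b _ => ?_
          simp only [star_mul']; ring
      _ = (∑ a, Ei x a * star (Ei x' a)) * (∑ b, Ej x b * star (Ej x' b)) := by
          rw [Finset.sum_mul_sum]
      _ = Ei x x' * Ej x x' := by rw [keyi, keyj]
      _ = (Ei.hadamard Ej) x x' := rfl
  have htrace_term : ∀ a b, star (w a b) ⬝ᵥ (El *ᵥ w a b)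
      = Matrix.trace (El * Matrix.vecMulVec (w a b) (star (w a b))) := by
    intro a b
    simp only [Matrix.trace, Matrix.diag_apply, Matrix.mul_apply, Matrix.vecMulVec_apply,
      dotProduct, mulVec_apply', Pi.star_apply, Finset.mul_sum]
    refine Finset.sum_congr rfl fun x _ => Finset.sum_congr rfl fun x' _ => by ring
  have htot : ∑ a, ∑ b, star (w a b) ⬝ᵥ (El *ᵥ w a b) = 0 := by
    have h0 : ∑ a, ∑ b, Matrix.trace (El * Matrix.vecMulVec (w a b) (star (w a b)))
        = Matrix.trace (El * (Ei.hadamard Ej)) := by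
      rw [← hsum]
      simp only [Matrix.mul_sum, Matrix.trace_sum]
    simp only [htrace_term]
    rw [h0, htr]
  have hterm : ∀ a b, star (w a b) ⬝ᵥ (El *ᵥ w a b)
      = star (El *ᵥ w a b) ⬝ᵥ (El *ᵥ w a b) := by
    intro a b
    rw [Matrix.star_mulVec, ← Matrix.dotProduct_mulVec, Matrix.mulVec_mulVec, hElH, hElI]
  have hnn : ∀ a b, El *ᵥ w a b = 0 := by
    have h1 : ∑ a, ∑ b, ((∑ x, Complex.normSq ((El *ᵥ w a b) x) : ℝ) : ℂ) = 0 := by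
      rw [← htot]
      refine Finset.sum_congr rfl fun a _ => Finset.sum_congr rfl fun b _ => ?_
      rw [hterm a b]
      push_cast
      simp only [dotProduct, Pi.star_apply]
      exact Finset.sum_congr rfl fun x _ => by
        rw [Complex.star_def, mul_comm, Complex.mul_conj]
    have h2 : ∑ a, ∑ b, (∑ x, Complex.normSq ((El *ᵥ w a b) x)) = (0 : ℝ) := by
      exact_mod_cast h1
    have h3 := (Finset.sum_eq_zero_iff_of_nonneg (fun a _ =>
      Finset.sum_nonneg fun b _ => Finset.sum_nonneg fun x _ =>
        Complex.normSq_nonneg _)).mp h2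
    intro a b
    have h4 := (Finset.sum_eq_zero_iff_of_nonneg (fun b _ =>
      Finset.sum_nonneg fun x _ => Complex.normSq_nonneg _)).mp
      (h3 a (Finset.mem_univ a)) b (Finset.mem_univ b)
    have h5 := (Finset.sum_eq_zero_iff_of_nonneg (fun x _ =>
      Complex.normSq_nonneg _)).mp h4
    funext x
    exact Complex.normSq_eq_zero.mp (h5 x (Finset.mem_univ x))
  have hF : (Ei *ᵥ y) * (Ej *ᵥ z) = ∑ a, ∑ b, (y a * z b) • w a b := by
    funext x
    simp only [Pi.mul_apply, mulVec_apply', Finset.sum_apply, Pi.smul_apply, smul_eq_mul,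
      Finset.sum_mul_sum]
    refine Finset.sum_congr rfl fun a _ => Finset.sum_congr rfl fun b _ => by
      simp only [hw]; ring
  rw [hF]
  have hlin : El *ᵥ (∑ a, ∑ b, (y a * z b) • w a b)
      = ∑ a, ∑ b, (y a * z b) • (El *ᵥ w a b) := by
    simp only [← Matrix.mulVecLin_apply, map_sum, LinearMap.map_smul]
  rw [hlin]
  simp [hnn]

/-! ### code distance lemmas -/

variable {G : SimpleGraph V} {C : Finset V}

lemma codeDist_exists (hCne : C.Nonempty) (v : V) :
    ∃ y ∈ C, G.dist v y = codeDist G C v := by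
  obtain ⟨c, hc⟩ := hCne
  have hne : {n | ∃ y ∈ C, G.dist v y = n}.Nonempty := ⟨G.dist v c, c, hc, rfl⟩
  exact Nat.sInf_mem hne

lemma codeDist_le {y : V} (hy : y ∈ C) (v : V) : codeDist G C v ≤ G.dist v y :=
  Nat.sInf_le ⟨y, hy, rfl⟩

lemma codeDist_adj (hconn : G.Connected) (hCne : C.Nonempty) {t z : V} (h : G.Adj t z) :
    codeDist G C t ≤ codeDist G C z + 1 := by
  obtain ⟨y, hy, hdz⟩ := codeDist_exists (G := G) hCne z
  have htri : G.dist t y ≤ G.dist t z + G.dist z y := hconn.dist_triangle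
  have h1 : G.dist t z = 1 := SimpleGraph.dist_eq_one_iff_adj.mpr h
  have := codeDist_le (G := G) hy t
  omega

lemma cell_step (hconn : G.Connected) (hCne : C.Nonempty) {i : ℕ}
    (h : ∃ t, codeDist G C t = i + 1) : ∃ z, codeDist G C z = i := by
  obtain ⟨t, ht⟩ := h
  obtain ⟨y, hy, hd⟩ := codeDist_exists (G := G) hCne t
  obtain ⟨p, hp⟩ := hconn.exists_walk_length_eq_dist t y
  rw [ht] at hd
  cases p with
  | nil => rw [hd] at hp; simp at hp
  | @cons _ z _ hadj p' =>
    refine ⟨z, ?_⟩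
    have hlen : p'.length = i := by
      have := hp; rw [hd] at this; simpa using this
    have hdzy : G.dist z y ≤ i := hlen ▸ SimpleGraph.dist_le p'
    have h1 : codeDist G C z ≤ i := le_trans (codeDist_le hy z) hdzy
    have h2 := codeDist_adj (G := G) (C := C) hconn hCne hadj
    omega

lemma cell_nonempty (hconn : G.Connected) (hCne : C.Nonempty) {ρ : ℕ}
    (hcov : ∃ v, codeDist G C v = ρ) : ∀ i ≤ ρ, ∃ t, codeDist G C t = i := by
  suffices h : ∀ m, ∃ t, codeDist G C t = ρ - m by
    intro i hi
    obtain ⟨t, ht⟩ := h (ρ - i)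
    exact ⟨t, by omega⟩
  intro m
  induction m with
  | zero => simpa using hcov
  | succ m ih =>
    by_cases hm : ρ - m = 0
    · obtain ⟨t, ht⟩ := ih
      exact ⟨t, by omega⟩
    · have heq : ρ - m = (ρ - (m + 1)) + 1 := by omega
      rw [heq] at ih
      exact cell_step hconn hCne ih

end St7

/-! ### the distance partition map -/

noncomputable def St7.dfin {V : Type*} (G : SimpleGraph V) (C : Finset V) (ρ : ℕ) (t : V) :
    Fin (ρ + 1) :=
  ⟨min (codeDist G C t) ρ, Nat.lt_succ_of_le (min_le_right _ _)⟩

noncomputable def St7.phi {V : Type*} (G : SimpleGraph V) (C : Finset V) (ρ : ℕ)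
    (v : Fin (ρ + 1) → ℂ) : V → ℂ :=
  fun t => v (St7.dfin G C ρ t)

namespace St7
variable {V : Type*} [Fintype V] [DecidableEq V]
variable {G : SimpleGraph V} [DecidableRel G.Adj] {C : Finset V} {ρ : ℕ} {γ α β : ℕ → ℕ}

lemma dfin_val (hb : codeDist G C t ≤ ρ) : ((dfin G C ρ t : Fin (ρ + 1)) : ℕ) = codeDist G C t :=
  min_eq_left hb

lemma cnt_eq (hconn : G.Connected) (hCne : C.Nonempty)
    (hble : ∀ v, codeDist G C v ≤ ρ)
    (hγ : ∀ i, 1 ≤ i → i ≤ ρ → ∀ v, codeDist G C v = i → nbrsInCell G C (i - 1) v = γ i)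
    (hα : ∀ i ≤ ρ, ∀ v, codeDist G C v = i → nbrsInCell G C i v = α i)
    (hβ : ∀ i ≤ ρ, ∀ v, codeDist G C v = i → nbrsInCell G C (i + 1) v = β i)
    (t : V) (m : Fin (ρ + 1)) :
    ((nbrsInCell G C (m : ℕ) t : ℕ) : ℂ) = quotientMatrix ℂ γ α β ρ (dfin G C ρ t) m := by
  have hd : codeDist G C t ≤ ρ := hble t
  have hi : ((dfin G C ρ t) : ℕ) = codeDist G C t := min_eq_left hd
  simp only [quotientMatrix, Matrix.of_apply, hi]
  by_cases h1 : codeDist G C t = (m : ℕ) + 1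
  · rw [if_pos h1]
    have hg := hγ (codeDist G C t) (by omega) (by omega) t rfl
    have hm : codeDist G C t - 1 = (m : ℕ) := by omega
    rw [hm] at hg
    exact_mod_cast congrArg (Nat.cast (R := ℂ)) hg
  · rw [if_neg h1]
    by_cases h2 : codeDist G C t = (m : ℕ)
    · rw [if_pos h2]
      have ha := hα (codeDist G C t) hd t rfl
      rw [h2] at ha
      rw [h2]
      exact_mod_cast congrArg (Nat.cast (R := ℂ)) ha
    · rw [if_neg h2]
      by_cases h3 : (m : ℕ) = codeDist G C t + 1
      · rw [if_pos h3]
        have hb := hβ (codeDist G C t) hd t rfl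
        rw [← h3] at hb
        exact_mod_cast congrArg (Nat.cast (R := ℂ)) hb
      · rw [if_neg h3]
        have hz : nbrsInCell G C (m : ℕ) t = 0 := by
          rw [nbrsInCell, Finset.card_eq_zero, Finset.filter_eq_empty_iff]
          intro z _
          rintro ⟨hadj, hcd⟩
          have l1 := codeDist_adj (G := G) (C := C) hconn hCne hadj
          have l2 := codeDist_adj (G := G) (C := C) hconn hCne hadj.symm
          omega
        rw [hz]
        simp

lemma intertwine (hconn : G.Connected) (hCne : C.Nonempty)
    (hble : ∀ v, codeDist G C v ≤ ρ)
    (hγ : ∀ i, 1 ≤ i → i ≤ ρ → ∀ v, codeDist G C v = i → nbrsInCell G C (i - 1) v = γ i)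
    (hα : ∀ i ≤ ρ, ∀ v, codeDist G C v = i → nbrsInCell G C i v = α i)
    (hβ : ∀ i ≤ ρ, ∀ v, codeDist G C v = i → nbrsInCell G C (i + 1) v = β i)
    (v : Fin (ρ + 1) → ℂ) :
    G.adjMatrix ℂ *ᵥ phi G C ρ v = phi G C ρ (quotientMatrix ℂ γ α β ρ *ᵥ v) := by
  funext t
  have step1 : (G.adjMatrix ℂ *ᵥ phi G C ρ v) t
      = ∑ m : Fin (ρ + 1), ((nbrsInCell G C (m : ℕ) t : ℕ) : ℂ) * v m := by
    rw [mulVec_apply']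
    calc ∑ z, G.adjMatrix ℂ t z * phi G C ρ v z
        = ∑ z, ∑ m : Fin (ρ + 1), if m = dfin G C ρ z ∧ G.Adj t z then v m else 0 := by
          refine Finset.sum_congr rfl fun z _ => ?_
          rw [SimpleGraph.adjMatrix_apply]
          by_cases hadj : G.Adj t z
          · simp only [hadj, and_true, if_true, one_mul, phi]
            rw [Finset.sum_ite_eq' Finset.univ (dfin G C ρ z) v]
            simp
          · simp [hadj]
      _ = ∑ m : Fin (ρ + 1), ∑ z, if m = dfin G C ρ z ∧ G.Adj t z then v m else 0 :=
          Finset.sum_comm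
      _ = ∑ m : Fin (ρ + 1), ((nbrsInCell G C (m : ℕ) t : ℕ) : ℂ) * v m := by
          refine Finset.sum_congr rfl fun m _ => ?_
          have hfe : (Finset.univ.filter fun z => m = dfin G C ρ z ∧ G.Adj t z)
              = Finset.univ.filter fun z => G.Adj t z ∧ codeDist G C z = (m : ℕ) := by
            apply Finset.filter_congr
            intro z _
            have hz : ((dfin G C ρ z) : ℕ) = codeDist G C z := min_eq_left (hble z)
            constructor
            · rintro ⟨ha, hb⟩
              exact ⟨hb, by rw [← hz, ← ha]⟩
            · rintro ⟨ha, hb⟩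
              refine ⟨Fin.ext ?_, ha⟩
              rw [hz, hb]
          rw [Finset.sum_ite, Finset.sum_const, Finset.sum_const_zero, add_zero, hfe]
          rw [nbrsInCell]
          simp [mul_comm]
  have step2 : phi G C ρ (quotientMatrix ℂ γ α β ρ *ᵥ v) t
      = ∑ m : Fin (ρ + 1), quotientMatrix ℂ γ α β ρ (dfin G C ρ t) m * v m := rfl
  rw [step1, step2]
  exact Finset.sum_congr rfl fun m _ => by
    rw [cnt_eq hconn hCne hble hγ hα hβ t m]

end St7

theorem stmt7 {V : Type*} [Fintype V] [DecidableEq V]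
    (G : SimpleGraph V) [DecidableRel G.Adj] (k D : ℕ) (b c : ℕ → ℕ)
    (hG : IsDRG G k D b c)
    (θ : Fin (D + 1) → ℝ) (hθ0 : θ 0 = k)
    (E : Fin (D + 1) → Matrix V V ℂ) (hPI : PrimIdem (G.adjMatrix ℂ) D θ E)
    (q : Fin (D + 1) → Fin (D + 1) → Fin (D + 1) → ℝ)
    (hq : KreinRel D E q) (hQ : QPolyKrein D q)
    (C : Finset V) (ρ : ℕ) (γ α β : ℕ → ℕ)
    (hC : IsCRC G C ρ γ α β)
    (idx : Fin (ρ + 1) → Fin (D + 1)) (hidx0 : idx 0 = 0) (hidxmono : StrictMono idx)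
    (hspec : spectrum ℂ (quotientMatrix ℂ γ α β ρ) =
      Set.range fun j => (θ (idx j) : ℂ))
    (u : Fin (ρ + 1) → ℝ)
    (hu : quotientMatrix ℝ γ α β ρ *ᵥ u = θ (idx 1) • u) (hu0 : u 0 = 1)
    (huinj : Function.Injective u) :
    ∀ j : Fin ρ, (idx j.succ : ℕ) - (idx j.castSucc : ℕ) ≤ (idx 1 : ℕ) := by
  intro j
  by_contra hcon
  push_neg at hcon
  obtain ⟨hθinj, hEidem, hEherm, hAE, hEsum, hEne⟩ := hPI
  obtain ⟨hCne, hble, hcov, hγ, hα, hβ⟩ := hC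
  have hconn : G.Connected := hG.1
  have hA : (G.adjMatrix ℂ)ᴴ = G.adjMatrix ℂ := St7.adj_conjTranspose G
  have hidxinj : Function.Injective idx := hidxmono.injective
  -- the gap hypothesis
  have hmono' : (idx j.castSucc : ℕ) < (idx j.succ : ℕ) := hidxmono (Fin.castSucc_lt_succ (i := j))
  have hgap : (idx j.castSucc : ℕ) + (idx 1 : ℕ) < (idx j.succ : ℕ) := by omega
  -- the intertwining relation
  have hint : ∀ v, G.adjMatrix ℂ *ᵥ St7.phi G C ρ v
      = St7.phi G C ρ (quotientMatrix ℂ γ α β ρ *ᵥ v) :=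
    fun v => St7.intertwine hconn hCne hble hγ hα hβ v
  -- eigenvectors of the quotient matrix
  have hev : ∀ r : Fin (ρ + 1), ∃ v : Fin (ρ + 1) → ℂ, v ≠ 0 ∧
      quotientMatrix ℂ γ α β ρ *ᵥ v = ((θ (idx r) : ℝ) : ℂ) • v := by
    intro r
    have hmem : ((θ (idx r) : ℝ) : ℂ) ∈ spectrum ℂ (quotientMatrix ℂ γ α β ρ) := by
      rw [hspec]; exact ⟨r, rfl⟩
    rw [spectrum.mem_iff] at hmem
    have hdet : ((algebraMap ℂ (Matrix (Fin (ρ + 1)) (Fin (ρ + 1)) ℂ)) ((θ (idx r) : ℝ) : ℂ)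
        - quotientMatrix ℂ γ α β ρ).det = 0 := by
      by_contra hd
      exact hmem ((Matrix.isUnit_iff_isUnit_det _).mpr (Ne.isUnit hd))
    obtain ⟨v, hv0, hv⟩ := Matrix.exists_mulVec_eq_zero_iff.mpr hdet
    refine ⟨v, hv0, ?_⟩
    rw [Matrix.sub_mulVec] at hv
    have halg : (algebraMap ℂ (Matrix (Fin (ρ + 1)) (Fin (ρ + 1)) ℂ)) ((θ (idx r) : ℝ) : ℂ) *ᵥ v
        = ((θ (idx r) : ℝ) : ℂ) • v := by
      rw [Algebra.algebraMap_eq_smul_one, Matrix.smul_mulVec, Matrix.one_mulVec]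
    rw [halg] at hv
    exact (sub_eq_zero.mp hv).symm
  choose ev hev0 hevU using hev
  -- phi of an eigenvector of U is an eigenvector of A
  have hAev : ∀ r, G.adjMatrix ℂ *ᵥ St7.phi G C ρ (ev r)
      = ((θ (idx r) : ℝ) : ℂ) • St7.phi G C ρ (ev r) := by
    intro r; rw [hint, hevU r]; rfl
  -- linear independence and spanning of the eigenvectors
  have hμinj : Function.Injective (fun r : Fin (ρ + 1) => ((θ (idx r) : ℝ) : ℂ)) := by
    intro a b hab
    simp only [] at hab
    exact hidxinj (hθinj (Complex.ofReal_inj.mp hab))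
  have hli : LinearIndependent ℂ ev := by
    apply Module.End.eigenvectors_linearIndependent' (Matrix.mulVecLin (quotientMatrix ℂ γ α β ρ))
      (fun r => ((θ (idx r) : ℝ) : ℂ)) hμinj
    intro r
    constructor
    · rw [Module.End.mem_eigenspace_iff]
      simpa [Matrix.mulVecLin_apply] using hevU r
    · exact hev0 r
  have hspan : Submodule.span ℂ (Set.range ev) = ⊤ := by
    apply hli.span_eq_top_of_card_eq_finrank
    simp [Module.finrank_pi]
  -- E l kills the range of phi for l outside the range of idx
  have hkill : ∀ l : Fin (D + 1), (∀ r, l ≠ idx r) → ∀ v, E l *ᵥ St7.phi G C ρ v = 0 := by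
    intro l hl v
    have hv : v ∈ Submodule.span ℂ (Set.range ev) := hspan ▸ Submodule.mem_top
    rw [Submodule.mem_span_range_iff_exists_fun] at hv
    obtain ⟨cc, hcc⟩ := hv
    have hphis : St7.phi G C ρ v = ∑ r, cc r • St7.phi G C ρ (ev r) := by
      rw [← hcc]; funext t; simp [St7.phi, Finset.sum_apply]
    rw [hphis]
    have hdist : E l *ᵥ (∑ r, cc r • St7.phi G C ρ (ev r))
        = ∑ r, cc r • (E l *ᵥ St7.phi G C ρ (ev r)) := by
      simp only [← Matrix.mulVecLin_apply, map_sum, LinearMap.map_smul]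
    rw [hdist]
    refine Finset.sum_eq_zero fun r _ => ?_
    rw [St7.proj_eig hA hEherm hAE (hAev r) (fun hc => (hl r) (hθinj hc)), smul_zero]
  -- the entrywise powers
  set wp : ℕ → V → ℂ := fun p => St7.phi G C ρ (fun i => ((u i : ℝ) : ℂ) ^ p) with hwp
  -- the complexified eigen-equation for u
  have hucx : quotientMatrix ℂ γ α β ρ *ᵥ (fun i => ((u i : ℝ) : ℂ))
      = ((θ (idx 1) : ℝ) : ℂ) • (fun i => ((u i : ℝ) : ℂ)) := by
    funext i
    have hui := congrFun hu i
    simp only [Matrix.mulVec, dotProduct, Pi.smul_apply, smul_eq_mul] at hui ⊢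
    have hcast : ∀ jj, quotientMatrix ℂ γ α β ρ i jj
        = ((quotientMatrix ℝ γ α β ρ i jj : ℝ) : ℂ) := by
      intro jj; simp only [quotientMatrix, Matrix.of_apply]; split_ifs <;> simp
    calc ∑ jj, quotientMatrix ℂ γ α β ρ i jj * ((u jj : ℝ) : ℂ)
        = ((∑ jj, quotientMatrix ℝ γ α β ρ i jj * u jj : ℝ) : ℂ) := by
          push_cast
          exact Finset.sum_congr rfl fun jj _ => by rw [hcast jj]
      _ = ((θ (idx 1) * u i : ℝ) : ℂ) := by rw [hui]
      _ = ((θ (idx 1) : ℝ) : ℂ) * ((u i : ℝ) : ℂ) := by push_cast; ring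
  have hwEig : G.adjMatrix ℂ *ᵥ wp 1 = ((θ (idx 1) : ℝ) : ℂ) • wp 1 := by
    have h1 : (fun i : Fin (ρ + 1) => ((u i : ℝ) : ℂ) ^ 1) = fun i => ((u i : ℝ) : ℂ) := by
      funext i; rw [pow_one]
    rw [hwp]
    simp only [h1]
    rw [hint, hucx]; rfl
  have hwE : E (idx 1) *ᵥ wp 1 = wp 1 :=
    St7.eig_self hA hθinj hEherm hAE hEsum hwEig
  -- the key invariant, by induction on the power p
  have hQ' : ∀ p : ℕ, ∀ l : Fin (D + 1), (∀ r : Fin (ρ + 1), r ≤ j.castSucc → l ≠ idx r) →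
      E l *ᵥ wp p = 0 := by
    intro p
    induction p with
    | zero =>
      intro l hl
      have hone : wp 0 = fun _ => (1 : ℂ) := by funext t; simp [hwp, St7.phi]
      have h1eig : G.adjMatrix ℂ *ᵥ (fun _ : V => (1 : ℂ))
          = ((θ 0 : ℝ) : ℂ) • (fun _ : V => (1 : ℂ)) := by
        funext t
        have hdeg := hG.2.1 t
        have hthis := SimpleGraph.adjMatrix_mulVec_const_apply (G := G) (α := ℂ) (a := (1 : ℂ)) (v := t)
        calc (G.adjMatrix ℂ *ᵥ fun _ : V => (1 : ℂ)) t
            = (G.adjMatrix ℂ *ᵥ Function.const V (1 : ℂ)) t := rfl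
          _ = (G.degree t : ℂ) * 1 := hthis
          _ = (((θ 0 : ℝ) : ℂ) • fun _ : V => (1 : ℂ)) t := by
              rw [hdeg, hθ0]; simp
      have hl0 : l ≠ 0 := by rw [← hidx0]; exact hl 0 (Fin.zero_le _)
      rw [hone]
      exact St7.proj_eig hA hEherm hAE h1eig (fun hc => hl0 (hθinj hc))
    | succ p ih =>
      intro l hl
      by_cases hran : ∀ r : Fin (ρ + 1), l ≠ idx r
      · exact hkill l hran _
      · push_neg at hran
        obtain ⟨s, hs⟩ := hran
        have hsJ : ¬ s ≤ j.castSucc := fun hcs => hl s hcs hs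
        have hlge : (idx j.castSucc : ℕ) + (idx 1 : ℕ) < (l : ℕ) := by
          have hjs : j.succ ≤ s := by
            have h1 : j.castSucc < s := lt_of_not_ge hsJ
            have h2 : (j.castSucc : ℕ) < (s : ℕ) := h1
            have h3 : (j.succ : ℕ) ≤ (s : ℕ) := by
              simp only [Fin.val_succ, Fin.coe_castSucc] at h2 ⊢
              omega
            exact h3
          have hle : (idx j.succ : ℕ) ≤ (idx s : ℕ) := by
            rcases eq_or_lt_of_le hjs with h | h
            · rw [h]
            · exact le_of_lt (hidxmono h)
          rw [hs]; omega
        have hwsucc : wp (p + 1) = wp 1 * wp p := by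
          funext t
          simp only [hwp, St7.phi, Pi.mul_apply, pow_one]
          rw [pow_succ']
        have hdecomp : wp p = ∑ m, E m *ᵥ wp p := (St7.decomp hEsum (wp p)).symm
        calc E l *ᵥ wp (p + 1) = E l *ᵥ (wp 1 * wp p) := by rw [hwsucc]
          _ = E l *ᵥ (wp 1 * ∑ m, E m *ᵥ wp p) := by rw [← hdecomp]
          _ = E l *ᵥ (∑ m, wp 1 * (E m *ᵥ wp p)) := by rw [Finset.mul_sum]
          _ = ∑ m, E l *ᵥ (wp 1 * (E m *ᵥ wp p)) := by
              simp only [← Matrix.mulVecLin_apply, map_sum]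
          _ = 0 := by
              refine Finset.sum_eq_zero fun m _ => ?_
              by_cases hm : ∀ r : Fin (ρ + 1), r ≤ j.castSucc → m ≠ idx r
              · rw [ih m hm, mul_zero, Matrix.mulVec_zero]
              · push_neg at hm
                obtain ⟨r, hrJ, hrm⟩ := hm
                have hmle : (m : ℕ) ≤ (idx j.castSucc : ℕ) := by
                  rw [hrm]
                  rcases eq_or_lt_of_le hrJ with h | h
                  · rw [h]
                  · exact le_of_lt (hidxmono h)
                have hq0 : q (idx 1) m l = 0 := by
                  apply (hQ (idx 1) m l).1
                  rintro ⟨-, h2⟩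
                  omega
                have htr : Matrix.trace (E l * ((E (idx 1)).hadamard (E m))) = 0 := by
                  rw [hq (idx 1) m, Matrix.mul_smul, Matrix.trace_smul, Matrix.mul_sum,
                    Matrix.trace_sum]
                  rw [Finset.sum_eq_single l]
                  · rw [Matrix.mul_smul, Matrix.trace_smul, hq0]
                    simp
                  · intro b _ hb
                    rw [Matrix.mul_smul, Matrix.trace_smul,
                      St7.orth hA hθinj hEherm hAE (Ne.symm hb), Matrix.trace_zero, smul_zero]
                  · intro hb
                    exact absurd (Finset.mem_univ l) hb
                have hkv := St7.krein_vanish (E (idx 1)) (E m) (E l)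
                  (by rw [hEherm, hEidem]) (by rw [hEherm, hEidem]) (hEherm l) (hEidem l)
                  htr (wp 1) (wp p)
                rw [hwE] at hkv
                exact hkv
  -- the invariant kills the projection onto E (idx j.succ)
  have hQJ : ∀ p : ℕ, E (idx j.succ) *ᵥ wp p = 0 := by
    intro p
    apply hQ' p
    intro r hr hEq
    have heq := hidxinj hEq
    rw [← heq] at hr
    have h1 : (j.succ : ℕ) ≤ (j.castSucc : ℕ) := hr
    simp only [Fin.val_succ, Fin.coe_castSucc] at h1
    omega
  -- the Vandermonde argument: phi (ev j.succ) lies in the span of the wp's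
  have hdet : (Matrix.vandermonde (fun i => ((u i : ℝ) : ℂ))).det ≠ 0 := by
    rw [Matrix.det_vandermonde]
    apply Finset.prod_ne_zero_iff.mpr
    intro i _
    apply Finset.prod_ne_zero_iff.mpr
    intro jj hjj
    have hij : i < jj := Finset.mem_Ioi.mp hjj
    intro hc
    have h1 : ((u jj : ℝ) : ℂ) = ((u i : ℝ) : ℂ) := sub_eq_zero.mp hc
    have h2 : u jj = u i := by exact_mod_cast h1
    exact absurd (huinj h2) (ne_of_gt hij)
  have hWa : Matrix.vandermonde (fun i => ((u i : ℝ) : ℂ)) *ᵥ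
      ((Matrix.vandermonde (fun i => ((u i : ℝ) : ℂ)))⁻¹ *ᵥ ev j.succ) = ev j.succ := by
    rw [Matrix.mulVec_mulVec, Matrix.mul_nonsing_inv _ (Ne.isUnit hdet), Matrix.one_mulVec]
  set a := (Matrix.vandermonde (fun i => ((u i : ℝ) : ℂ)))⁻¹ *ᵥ ev j.succ with ha
  have hphiexp : St7.phi G C ρ (ev j.succ) = ∑ p : Fin (ρ + 1), a p • wp (p : ℕ) := by
    funext t
    conv_lhs => rw [St7.phi, ← hWa]
    simp only [Matrix.mulVec, dotProduct, Matrix.vandermonde_apply,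
      Finset.sum_apply, Pi.smul_apply, smul_eq_mul, hwp, St7.phi]
    exact Finset.sum_congr rfl fun p _ => mul_comm _ _
  have hzero : E (idx j.succ) *ᵥ St7.phi G C ρ (ev j.succ) = 0 := by
    rw [hphiexp]
    have hdist : E (idx j.succ) *ᵥ (∑ p : Fin (ρ + 1), a p • wp (p : ℕ))
        = ∑ p : Fin (ρ + 1), a p • (E (idx j.succ) *ᵥ wp (p : ℕ)) := by
      simp only [← Matrix.mulVecLin_apply, map_sum, LinearMap.map_smul]
    rw [hdist]
    exact Finset.sum_eq_zero fun p _ => by rw [hQJ (p : ℕ), smul_zero]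
  have hEself : E (idx j.succ) *ᵥ St7.phi G C ρ (ev j.succ) = St7.phi G C ρ (ev j.succ) :=
    St7.eig_self hA hθinj hEherm hAE hEsum (hAev j.succ)
  have hphine : St7.phi G C ρ (ev j.succ) ≠ 0 := by
    have h0 := hev0 j.succ
    have hex : ∃ i, ev j.succ i ≠ 0 := by
      by_contra hok; push_neg at hok; exact h0 (funext hok)
    obtain ⟨i, hi⟩ := hex
    obtain ⟨t, ht⟩ := St7.cell_nonempty hconn hCne hcov (i : ℕ) (by omega)
    intro hc
    apply hi
    have hz : St7.phi G C ρ (ev j.succ) t = 0 := by rw [hc]; rfl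
    have hdf : St7.dfin G C ρ t = i := by
      apply Fin.ext
      simp only [St7.dfin, ht]
      exact min_eq_left (by omega)
    rw [St7.phi, hdf] at hz
    exact hz
  exact hphine (by rw [← hEself, hzero])
end

section
/- Let Γ and Γ′ be distance-regular graphs with the same valency k, and let C in Γ and C′ in Γ′ be completely regular codes with the same covering radius ρ, with eigenvalue orderings Spec(C) = {η_0 = k, η_1, …, η_ρ} and Spec(C′) = {η′_0 = k, η′_1, …, η′_ρ}, and associated coefficients λ_i, τ_i and λ′_i, τ′_i respectively (i.e., u(η_1)∘u(η_1) = Σ λ_i u(η_i), u(η_1)∘u(η_1)∘u(η_1) = Σ τ_i u(η_i), and similarly for C′). Suppose η_1 = η′_1 and η_1 is non-degenerate for C, that λ_i = λ′_i and τ_i = τ′_i for all 0 ≤ i ≤ ρ, and that η_i = η′_i whenever λ_i ≠ 0 or τ_i ≠ 0. Then C and C′ have the same intersection numbers: γ_i = γ′_i, α_i = α′_i and β_i = β′_i for all 0 ≤ i ≤ ρ. -/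
open Finset Matrix

variable {V : Type*}

set_option linter.unusedSectionVars false
set_option linter.unusedVariables false
set_option maxHeartbeats 4000000
section
section GraphHelpers

variable {W : Type*} [Fintype W] {G : SimpleGraph W} {C : Finset W}

lemma codeDist_spec' (hG : G.Connected) (hC : C.Nonempty) (v : W) :
    ∃ y ∈ C, G.dist v y = codeDist G C v := by
  obtain ⟨y0, hy0⟩ := hC
  exact Nat.sInf_mem (⟨G.dist v y0, y0, hy0, rfl⟩ :
    ({n | ∃ y ∈ C, G.dist v y = n} : Set ℕ).Nonempty)

lemma codeDist_le_dist' {y : W} (hy : y ∈ C) (v : W) :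
    codeDist G C v ≤ G.dist v y :=
  Nat.sInf_le ⟨y, hy, rfl⟩

lemma codeDist_tri (hG : G.Connected) (hC : C.Nonempty) (a b : W) :
    codeDist G C a ≤ G.dist a b + codeDist G C b := by
  obtain ⟨y, hy, hd⟩ := codeDist_spec' hG hC b
  have h1 := codeDist_le_dist' (G := G) hy a
  have h2 := hG.dist_triangle (u := a) (v := b) (w := y)
  omega

lemma codeDist_adj (hG : G.Connected) (hC : C.Nonempty) {a b : W} (h : G.Adj a b) :
    codeDist G C a ≤ codeDist G C b + 1 := by
  have h1 := codeDist_tri hG hC a b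
  have h2 : G.dist a b = 1 := by rwa [SimpleGraph.dist_eq_one_iff_adj]
  omega

lemma codeDist_step (hG : G.Connected) (hC : C.Nonempty) {v : W} {n : ℕ}
    (h : codeDist G C v = n + 1) : ∃ w, G.Adj v w ∧ codeDist G C w = n := by
  obtain ⟨y, hy, hd⟩ := codeDist_spec' hG hC v
  rw [h] at hd
  obtain ⟨p, hp⟩ := (hG v y).exists_walk_length_eq_dist
  rw [hd] at hp
  cases p with
  | nil => simp at hp
  | @cons _ wmid _ hadj q =>
    refine ⟨wmid, hadj, le_antisymm ?_ ?_⟩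
    · have h1 : G.dist wmid y ≤ q.length := SimpleGraph.dist_le q
      have h2 := codeDist_le_dist' (G := G) hy wmid
      simp only [SimpleGraph.Walk.length_cons] at hp
      omega
    · have h3 := codeDist_adj hG hC hadj
      omega

lemma codeDist_surj (hG : G.Connected) (hC : C.Nonempty) :
    ∀ n, (∃ v, codeDist G C v = n) → ∀ i ≤ n, ∃ w, codeDist G C w = i := by
  intro n
  induction n with
  | zero =>
    rintro ⟨v, hv⟩ i hi
    have : i = 0 := by omega
    exact ⟨v, this ▸ hv⟩
  | succ n ih =>
    rintro ⟨v, hv⟩ i hi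
    rcases Nat.lt_or_ge i (n + 1) with h | h
    · obtain ⟨w, -, hw⟩ := codeDist_step hG hC hv
      exact ih ⟨w, hw⟩ i (by omega)
    · have : i = n + 1 := by omega
      exact ⟨v, this ▸ hv⟩

lemma degree_split [DecidableEq W] [DecidableRel G.Adj] (hG : G.Connected) (hC : C.Nonempty)
    {v : W} {i : ℕ} (hv : codeDist G C v = i) (hi : 1 ≤ i) :
    nbrsInCell G C (i-1) v + nbrsInCell G C i v + nbrsInCell G C (i+1) v = G.degree v := by
  classical
  have hdeg : G.degree v = (Finset.univ.filter fun z => G.Adj v z).card := by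
    rw [SimpleGraph.degree, SimpleGraph.neighborFinset_eq_filter]
  have hmem : ∀ z, G.Adj v z →
      codeDist G C z = i - 1 ∨ codeDist G C z = i ∨ codeDist G C z = i + 1 := by
    intro z hz
    have h1 := codeDist_adj hG hC hz
    have h2 := codeDist_adj hG hC hz.symm
    omega
  have hd1 : Disjoint (Finset.univ.filter fun z => G.Adj v z ∧ codeDist G C z = i-1)
      (Finset.univ.filter fun z => G.Adj v z ∧ codeDist G C z = i) := by
    rw [Finset.disjoint_left]
    intro z h1 h2
    simp only [Finset.mem_filter] at h1 h2
    omega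
  have hd2 : Disjoint ((Finset.univ.filter fun z => G.Adj v z ∧ codeDist G C z = i-1) ∪
      (Finset.univ.filter fun z => G.Adj v z ∧ codeDist G C z = i))
      (Finset.univ.filter fun z => G.Adj v z ∧ codeDist G C z = i+1) := by
    rw [Finset.disjoint_left]
    intro z h1 h2
    simp only [Finset.mem_union, Finset.mem_filter] at h1 h2
    omega
  have hun : (Finset.univ.filter fun z => G.Adj v z) =
      ((Finset.univ.filter fun z => G.Adj v z ∧ codeDist G C z = i-1) ∪
        (Finset.univ.filter fun z => G.Adj v z ∧ codeDist G C z = i)) ∪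
        (Finset.univ.filter fun z => G.Adj v z ∧ codeDist G C z = i+1) := by
    ext z
    simp only [Finset.mem_union, Finset.mem_filter, Finset.mem_univ, true_and]
    constructor
    · intro hz; rcases hmem z hz with h | h | h <;> tauto
    · rintro ((⟨h, -⟩ | ⟨h, -⟩) | ⟨h, -⟩) <;> exact h
  rw [hdeg, hun, Finset.card_union_of_disjoint hd2, Finset.card_union_of_disjoint hd1]
  rfl

lemma degree_split0 [DecidableEq W] [DecidableRel G.Adj] (hG : G.Connected) (hC : C.Nonempty)
    {v : W} (hv : codeDist G C v = 0) :
    nbrsInCell G C 0 v + nbrsInCell G C 1 v = G.degree v := by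
  classical
  have hdeg : G.degree v = (Finset.univ.filter fun z => G.Adj v z).card := by
    rw [SimpleGraph.degree, SimpleGraph.neighborFinset_eq_filter]
  have hmem : ∀ z, G.Adj v z → codeDist G C z = 0 ∨ codeDist G C z = 1 := by
    intro z hz
    have h1 := codeDist_adj hG hC hz.symm
    omega
  have hd1 : Disjoint (Finset.univ.filter fun z => G.Adj v z ∧ codeDist G C z = 0)
      (Finset.univ.filter fun z => G.Adj v z ∧ codeDist G C z = 1) := by
    rw [Finset.disjoint_left]
    intro z h1 h2
    simp only [Finset.mem_filter] at h1 h2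
    omega
  have hun : (Finset.univ.filter fun z => G.Adj v z) =
      (Finset.univ.filter fun z => G.Adj v z ∧ codeDist G C z = 0) ∪
        (Finset.univ.filter fun z => G.Adj v z ∧ codeDist G C z = 1) := by
    ext z
    simp only [Finset.mem_union, Finset.mem_filter, Finset.mem_univ, true_and]
    constructor
    · intro hz; rcases hmem z hz with h | h <;> tauto
    · rintro (⟨h, -⟩ | ⟨h, -⟩) <;> exact h
  rw [hdeg, hun, Finset.card_union_of_disjoint hd1]
  rfl

end GraphHelpers

section AlgHelpers

lemma quotRow {ρ : ℕ} (γ α β : ℕ → ℕ) (v : Fin (ρ+1) → ℝ) (m : ℕ) (hm : m ≤ ρ) :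
    (quotientMatrix ℝ γ α β ρ *ᵥ v) ⟨m, by have := hm; omega⟩ =
      (if 1 ≤ m then (γ m : ℝ) * v ⟨m - 1, by have := hm; omega⟩ else 0) +
        (α m : ℝ) * v ⟨m, by have := hm; omega⟩ +
        (if h : m + 1 ≤ ρ then (β m : ℝ) * v ⟨m + 1, by have := hm; omega⟩ else 0) := by
  have hstart : (quotientMatrix ℝ γ α β ρ *ᵥ v) ⟨m, by have := hm; omega⟩ =
      ∑ j : Fin (ρ+1), (if m = (j : ℕ) + 1 then (γ m : ℝ)
        else if m = (j : ℕ) then (α m : ℝ)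
        else if (j : ℕ) = m + 1 then (β m : ℝ) else 0) * v j := rfl
  rw [hstart]
  have hsplit : ∀ j : Fin (ρ+1),
      (if m = (j : ℕ) + 1 then (γ m : ℝ)
        else if m = (j : ℕ) then (α m : ℝ)
        else if (j : ℕ) = m + 1 then (β m : ℝ) else 0) * v j =
      (if m = (j : ℕ) + 1 then (γ m : ℝ) * v j else 0) +
        ((if m = (j : ℕ) then (α m : ℝ) * v j else 0) +
          (if (j : ℕ) = m + 1 then (β m : ℝ) * v j else 0)) := by
    intro j
    split_ifs <;> first | (exfalso; omega) | ring
  rw [Finset.sum_congr rfl fun j _ => hsplit j, Finset.sum_add_distrib,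
    Finset.sum_add_distrib]
  have hA : ∑ j : Fin (ρ+1), (if m = (j : ℕ) + 1 then (γ m : ℝ) * v j else 0)
      = (if 1 ≤ m then (γ m : ℝ) * v ⟨m - 1, by have := hm; omega⟩ else 0) := by
    by_cases h : 1 ≤ m
    · rw [if_pos h, Finset.sum_eq_single (⟨m - 1, by have := hm; omega⟩ : Fin (ρ+1))]
      · rw [if_pos (show m = ((⟨m - 1, by have := hm; omega⟩ : Fin (ρ+1)) : ℕ) + 1 by simp; omega)]
      · intro j _ hj
        rw [if_neg]
        intro hc
        exact hj (Fin.ext (by simp; omega))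
      · exact fun h => absurd (Finset.mem_univ _) h
    · rw [if_neg h]
      exact Finset.sum_eq_zero fun j _ => by rw [if_neg]; omega
  have hB : ∑ j : Fin (ρ+1), (if m = (j : ℕ) then (α m : ℝ) * v j else 0)
      = (α m : ℝ) * v ⟨m, by have := hm; omega⟩ := by
    rw [Finset.sum_eq_single (⟨m, by have := hm; omega⟩ : Fin (ρ+1))]
    · rw [if_pos rfl]
    · intro j _ hj
      rw [if_neg]
      intro hc
      exact hj (Fin.ext (by simp; omega))
    · exact fun h => absurd (Finset.mem_univ _) h
  have hCC : ∑ j : Fin (ρ+1), (if (j : ℕ) = m + 1 then (β m : ℝ) * v j else 0)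
      = (if h : m + 1 ≤ ρ then (β m : ℝ) * v ⟨m + 1, by have := hm; omega⟩ else 0) := by
    by_cases h : m + 1 ≤ ρ
    · rw [dif_pos h, Finset.sum_eq_single (⟨m + 1, by have := hm; omega⟩ : Fin (ρ+1))]
      · rw [if_pos rfl]
      · intro j _ hj
        rw [if_neg]
        intro hc
        exact hj (Fin.ext hc)
      · exact fun h => absurd (Finset.mem_univ _) h
    · rw [dif_neg h]
      refine Finset.sum_eq_zero fun j _ => by rw [if_neg]; have := j.isLt; omega
  rw [hA, hB, hCC]
  ring

lemma moment_unique {a b x x' g al be g' al' be' : ℝ}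
    (h1 : g + al + be = g' + al' + be')
    (h2 : g * a + al * b + be * x = g' * a + al' * b + be' * x')
    (h3 : g * (a * a) + al * (b * b) + be * (x * x)
        = g' * (a * a) + al' * (b * b) + be' * (x' * x'))
    (h4 : g * (a * a * a) + al * (b * b * b) + be * (x * x * x)
        = g' * (a * a * a) + al' * (b * b * b) + be' * (x' * x' * x'))
    (hab : a ≠ b) (hax : a ≠ x) (hbx : b ≠ x) (hbe : be ≠ 0) :
    x = x' ∧ g = g' ∧ al = al' ∧ be = be' := by
  have hxa : x - a ≠ 0 := sub_ne_zero.mpr (fun h => hax h.symm)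
  have hxb : x - b ≠ 0 := sub_ne_zero.mpr (fun h => hbx h.symm)
  have hx : x = x' := by
    have h5 : be * ((x - a) * ((x - b) * (x - x'))) = 0 := by
      linear_combination h4 - (a + b + x') * h3 + (a * b + a * x' + b * x') * h2
        - (a * b * x') * h1
    by_contra hne
    exact (mul_ne_zero hbe (mul_ne_zero hxa (mul_ne_zero hxb (sub_ne_zero.mpr hne)))) h5
  subst hx
  have hg : g = g' := by
    have h5 : (g - g') * ((a - b) * (a - x)) = 0 := by
      linear_combination h3 - (b + x) * h2 + (b * x) * h1
    have := mul_ne_zero (sub_ne_zero.mpr hab) (sub_ne_zero.mpr hax)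
    have := (mul_eq_zero.mp h5).resolve_right this
    linarith [sub_eq_zero.mp this]
  have hal : al = al' := by
    have h5 : (al - al') * ((b - a) * (b - x)) = 0 := by
      linear_combination h3 - (a + x) * h2 + (a * x) * h1
    have := mul_ne_zero (sub_ne_zero.mpr (Ne.symm hab)) (sub_ne_zero.mpr hbx)
    have := (mul_eq_zero.mp h5).resolve_right this
    linarith [sub_eq_zero.mp this]
  have hbe' : be = be' := by
    have h5 : (be - be') * ((x - a) * (x - b)) = 0 := by
      linear_combination h3 - (a + b) * h2 + (a * b) * h1
    have := (mul_eq_zero.mp h5).resolve_right (mul_ne_zero hxa hxb)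
    linarith [sub_eq_zero.mp this]
  exact ⟨rfl, hg, hal, hbe'⟩

lemma entry_eq {ρ : ℕ} {γ α β : ℕ → ℕ} {η : Fin (ρ+1) → ℝ} {u : Fin (ρ+1) → Fin (ρ+1) → ℝ}
    (hu : ∀ i, quotientMatrix ℝ γ α β ρ *ᵥ u i = η i • u i)
    {f : Fin (ρ+1) → ℝ} {c : Fin (ρ+1) → ℝ}
    (hf : f = ∑ i, c i • u i) (m : ℕ) (hm : m ≤ ρ) :
    (if 1 ≤ m then (γ m : ℝ) * f ⟨m - 1, by have := hm; omega⟩ else 0) +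
        (α m : ℝ) * f ⟨m, by have := hm; omega⟩ +
        (if h : m + 1 ≤ ρ then (β m : ℝ) * f ⟨m + 1, by have := hm; omega⟩ else 0)
      = ∑ j, c j * (η j * u j ⟨m, by have := hm; omega⟩) := by
  have hmv : quotientMatrix ℝ γ α β ρ *ᵥ f = ∑ j, c j • ((η j) • u j) := by
    rw [hf, ← Matrix.mulVecLin_apply, map_sum]
    exact Finset.sum_congr rfl fun j _ => by rw [LinearMap.map_smul, Matrix.mulVecLin_apply, hu j]
  have h2 := congrFun hmv ⟨m, by have := hm; omega⟩
  rw [quotRow γ α β f m hm] at h2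
  rw [h2, Finset.sum_apply]
  exact Finset.sum_congr rfl fun j _ => by simp [mul_assoc]

lemma propagate {ρ : ℕ} {γ α β γ' α' β' : ℕ → ℕ} {v v' : Fin (ρ+1) → ℝ} {μ : ℝ}
    (hv : quotientMatrix ℝ γ α β ρ *ᵥ v = μ • v)
    (hv' : quotientMatrix ℝ γ' α' β' ρ *ᵥ v' = μ • v')
    (m : ℕ) (hm : m + 1 ≤ ρ)
    (hγ : 1 ≤ m → (γ m : ℝ) = (γ' m : ℝ)) (hα : (α m : ℝ) = (α' m : ℝ))
    (hβ : (β m : ℝ) = (β' m : ℝ)) (hβ0 : (β m : ℝ) ≠ 0)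
    (hprev : 1 ≤ m → v ⟨m - 1, by have := hv; omega⟩ = v' ⟨m - 1, by have := hv; omega⟩)
    (hcur : v ⟨m, by have := hv; omega⟩ = v' ⟨m, by have := hv; omega⟩) :
    v ⟨m + 1, by have := hv; omega⟩ = v' ⟨m + 1, by have := hv; omega⟩ := by
  have e1 := congrFun hv ⟨m, by have := hv; omega⟩
  rw [quotRow γ α β v m (by omega), dif_pos hm] at e1
  have e2 := congrFun hv' ⟨m, by have := hv; omega⟩
  rw [quotRow γ' α' β' v' m (by omega), dif_pos hm] at e2
  simp only [Pi.smul_apply, smul_eq_mul] at e1 e2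
  by_cases h1 : 1 ≤ m
  · rw [if_pos h1] at e1 e2
    rw [← hγ h1, ← hα, ← hβ, ← hprev h1, ← hcur] at e2
    have hkey : (β m : ℝ) * v ⟨m + 1, by have := hv; omega⟩ = (β m : ℝ) * v' ⟨m + 1, by have := hv; omega⟩ := by
      linarith
    exact mul_left_cancel₀ hβ0 hkey
  · rw [if_neg h1] at e1 e2
    rw [← hα, ← hβ, ← hcur] at e2
    have hkey : (β m : ℝ) * v ⟨m + 1, by have := hv; omega⟩ = (β m : ℝ) * v' ⟨m + 1, by have := hv; omega⟩ := by
      linarith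
    exact mul_left_cancel₀ hβ0 hkey

end AlgHelpers

lemma crc_facts {W : Type*} [Fintype W] [DecidableEq W] (G : SimpleGraph W) [DecidableRel G.Adj]
    {k D ρ : ℕ} {b c γ α β : ℕ → ℕ} {C : Finset W}
    (hG : IsDRG G k D b c) (hC : IsCRC G C ρ γ α β) :
    (∀ i, 1 ≤ i → i ≤ ρ → γ i + α i + β i = k) ∧ (α 0 + β 0 = k) ∧
      (∀ i, i < ρ → 1 ≤ β i) ∧ β ρ = 0 := by
  obtain ⟨hconn, hdeg, -⟩ := hG
  obtain ⟨hne, hbound, ⟨vρ, hvρ⟩, hγs, hαs, hβs⟩ := hC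
  have hex : ∀ i ≤ ρ, ∃ v, codeDist G C v = i := codeDist_surj hconn hne ρ ⟨vρ, hvρ⟩
  refine ⟨?_, ?_, ?_, ?_⟩
  · intro i h1 h2
    obtain ⟨v, hv⟩ := hex i h2
    have hds := degree_split hconn hne hv h1
    rw [hγs i h1 h2 v hv, hαs i h2 v hv, hβs i h2 v hv, hdeg v] at hds
    exact hds
  · obtain ⟨v, hv⟩ := hex 0 (Nat.zero_le _)
    have hds := degree_split0 hconn hne hv
    rw [hαs 0 (Nat.zero_le _) v hv, hβs 0 (Nat.zero_le _) v hv, hdeg v] at hds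
    exact hds
  · intro i hi
    obtain ⟨v, hv⟩ := hex (i + 1) (by omega)
    obtain ⟨w, hadj, hw⟩ := codeDist_step hconn hne hv
    have hcard : 0 < nbrsInCell G C (i + 1) w := by
      rw [nbrsInCell, Finset.card_pos]
      exact ⟨v, by
        simp only [Finset.mem_filter, Finset.mem_univ, true_and]
        exact ⟨hadj.symm, hv⟩⟩
    have := hβs i (by omega) w hw
    omega
  · obtain ⟨v, hv⟩ := hex ρ le_rfl
    have h0 : nbrsInCell G C (ρ + 1) v = 0 := by
      rw [nbrsInCell, Finset.card_eq_zero, Finset.filter_eq_empty_iff]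
      intro z _
      rintro ⟨-, hcd⟩
      have := hbound z
      omega
    rw [← hβs ρ le_rfl v hv]
    exact h0

end

theorem stmt12 {V : Type*} [Fintype V] [DecidableEq V]
    {V' : Type*} [Fintype V'] [DecidableEq V']
    (G : SimpleGraph V) [DecidableRel G.Adj]
    (G' : SimpleGraph V') [DecidableRel G'.Adj]
    (k D D' : ℕ) (b c b' c' : ℕ → ℕ)
    (hG : IsDRG G k D b c) (hG' : IsDRG G' k D' b' c')
    (C : Finset V) (C' : Finset V') (ρ : ℕ)
    (γ α β γ' α' β' : ℕ → ℕ)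
    (hC : IsCRC G C ρ γ α β) (hC' : IsCRC G' C' ρ γ' α' β')
    (η η' : Fin (ρ + 1) → ℝ)
    (hηinj : Function.Injective η) (hη'inj : Function.Injective η')
    (hη0 : η 0 = k) (hη'0 : η' 0 = k)
    (u u' : Fin (ρ + 1) → Fin (ρ + 1) → ℝ)
    (hu : ∀ i, quotientMatrix ℝ γ α β ρ *ᵥ u i = η i • u i)
    (hu0 : ∀ i, u i 0 = 1)
    (hu' : ∀ i, quotientMatrix ℝ γ' α' β' ρ *ᵥ u' i = η' i • u' i)
    (hu'0 : ∀ i, u' i 0 = 1)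
    (lam tau lam' tau' : Fin (ρ + 1) → ℝ)
    (hlam : u 1 * u 1 = ∑ i, lam i • u i)
    (htau : u 1 * u 1 * u 1 = ∑ i, tau i • u i)
    (hlam' : u' 1 * u' 1 = ∑ i, lam' i • u' i)
    (htau' : u' 1 * u' 1 * u' 1 = ∑ i, tau' i • u' i)
    (hη1 : η 1 = η' 1)
    (hnd1 : ∀ (i : ℕ) (h : i + 1 ≤ ρ), u 1 ⟨i, by omega⟩ ≠ u 1 ⟨i + 1, by omega⟩)
    (hnd2 : ∀ (i : ℕ) (h : i + 2 ≤ ρ), u 1 ⟨i, by omega⟩ ≠ u 1 ⟨i + 2, by omega⟩)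
    (hlameq : ∀ i, lam i = lam' i) (htaueq : ∀ i, tau i = tau' i)
    (hmatch : ∀ i, (lam i ≠ 0 ∨ tau i ≠ 0) → η i = η' i) :
    (∀ i : ℕ, 1 ≤ i → i ≤ ρ → γ i = γ' i) ∧
      (∀ i ≤ ρ, α i = α' i) ∧ (∀ i ≤ ρ, β i = β' i) := by
  classical
  obtain ⟨hrow, hrow0, hβpos, hβρ0⟩ := crc_facts G hG hC
  obtain ⟨hrow', hrow0', hβpos', hβρ0'⟩ := crc_facts G' hG' hC'
  rcases Nat.eq_zero_or_pos ρ with hρ0 | hρpos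
  · subst hρ0
    refine ⟨fun i h1 h2 => by omega, fun i hi => ?_, fun i hi => ?_⟩
    · interval_cases i
      omega
    · interval_cases i
      omega
  have main : ∀ m : ℕ, ∀ hm : m ≤ ρ,
      (∀ n : ℕ, ∀ hn : n ≤ m, (u 1 ⟨n, by omega⟩ = u' 1 ⟨n, by omega⟩ ∧
          ∀ j, (lam j ≠ 0 ∨ tau j ≠ 0) → u j ⟨n, by omega⟩ = u' j ⟨n, by omega⟩)) ∧
        (∀ n : ℕ, n < m → ((1 ≤ n → γ n = γ' n) ∧ α n = α' n ∧ β n = β' n)) := by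
    intro m
    induction m with
    | zero =>
      intro _
      refine ⟨?_, fun n hn => absurd hn (by omega)⟩
      intro n hn
      have hn0 : n = 0 := by omega
      subst hn0
      have h0 : (⟨0, by omega⟩ : Fin (ρ + 1)) = 0 := by
        apply Fin.ext
        simp
      rw [h0]
      exact ⟨by rw [hu0 1, hu'0 1], fun j _ => by rw [hu0 j, hu'0 j]⟩
    | succ m ih =>
      intro hm1
      obtain ⟨hE, hR⟩ := ih (by omega)
      have hmρ : m < ρ := by omega
      have hsumlam : (∑ j, lam j * (η j * u j ⟨m, by omega⟩)) =
          ∑ j, lam' j * (η' j * u' j ⟨m, by omega⟩) := by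
        refine Finset.sum_congr rfl fun j _ => ?_
        by_cases h0 : lam j = 0
        · rw [← hlameq j, h0, zero_mul, zero_mul]
        · rw [← hlameq j, ← hmatch j (Or.inl h0), ← (hE m le_rfl).2 j (Or.inl h0)]
      have hsumtau : (∑ j, tau j * (η j * u j ⟨m, by omega⟩)) =
          ∑ j, tau' j * (η' j * u' j ⟨m, by omega⟩) := by
        refine Finset.sum_congr rfl fun j _ => ?_
        by_cases h0 : tau j = 0
        · rw [← htaueq j, h0, zero_mul, zero_mul]
        · rw [← htaueq j, ← hmatch j (Or.inr h0), ← (hE m le_rfl).2 j (Or.inr h0)]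
      have Esq := entry_eq hu hlam m (le_of_lt hmρ)
      have Esq' := entry_eq hu' hlam' m (le_of_lt hmρ)
      have Ecu := entry_eq hu htau m (le_of_lt hmρ)
      have Ecu' := entry_eq hu' htau' m (le_of_lt hmρ)
      have Ew := congrFun (hu 1) ⟨m, by omega⟩
      rw [quotRow γ α β (u 1) m (le_of_lt hmρ)] at Ew
      have Ew' := congrFun (hu' 1) ⟨m, by omega⟩
      rw [quotRow γ' α' β' (u' 1) m (le_of_lt hmρ)] at Ew'
      rw [dif_pos (show m + 1 ≤ ρ by omega)] at Esq Esq' Ecu Ecu' Ew Ew'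
      simp only [Pi.mul_apply, Pi.smul_apply, smul_eq_mul] at Esq Esq' Ecu Ecu' Ew Ew'
      have hwm : u' 1 ⟨m, by omega⟩ = u 1 ⟨m, by omega⟩ := ((hE m le_rfl).1).symm
      rw [hwm, ← hη1] at Ew'
      rw [hwm, ← hsumlam] at Esq'
      rw [hwm, ← hsumtau] at Ecu'
      have hβne : (β m : ℝ) ≠ 0 := Nat.cast_ne_zero.mpr (by have := hβpos m hmρ; omega)
      have hkey : ((1 ≤ m → γ m = γ' m) ∧ α m = α' m ∧ β m = β' m) ∧
          u 1 ⟨m + 1, by omega⟩ = u' 1 ⟨m + 1, by omega⟩ := by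
        by_cases h1m : 1 ≤ m
        · rw [if_pos h1m] at Esq Esq' Ecu Ecu' Ew Ew'
          have hwm1 : u' 1 ⟨m - 1, by omega⟩ = u 1 ⟨m - 1, by omega⟩ :=
            ((hE (m - 1) (by omega)).1).symm
          rw [hwm1] at Esq' Ecu' Ew'
          have hk1 : (γ m : ℝ) + (α m : ℝ) + (β m : ℝ) = (k : ℝ) := by
            exact_mod_cast congrArg (Nat.cast : ℕ → ℝ) (hrow m h1m (le_of_lt hmρ))
          have hk1' : (γ' m : ℝ) + (α' m : ℝ) + (β' m : ℝ) = (k : ℝ) := by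
            exact_mod_cast congrArg (Nat.cast : ℕ → ℝ) (hrow' m h1m (le_of_lt hmρ))
          have hidx1 : (⟨m - 1 + 1, by omega⟩ : Fin (ρ + 1)) = ⟨m, by omega⟩ :=
            Fin.ext (by simp; omega)
          have hidx2 : (⟨m - 1 + 2, by omega⟩ : Fin (ρ + 1)) = ⟨m + 1, by omega⟩ :=
            Fin.ext (by simp; omega)
          have hab : u 1 ⟨m - 1, by omega⟩ ≠ u 1 ⟨m, by omega⟩ := by
            have := hnd1 (m - 1) (by omega)
            rwa [hidx1] at this
          have hax : u 1 ⟨m - 1, by omega⟩ ≠ u 1 ⟨m + 1, by omega⟩ := by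
            have := hnd2 (m - 1) (by omega)
            rwa [hidx2] at this
          have hbx : u 1 ⟨m, by omega⟩ ≠ u 1 ⟨m + 1, by omega⟩ := hnd1 m (by omega)
          obtain ⟨hx, hg, hal, hbe⟩ := moment_unique
            (a := u 1 ⟨m - 1, by omega⟩) (b := u 1 ⟨m, by omega⟩)
            (x := u 1 ⟨m + 1, by omega⟩) (x' := u' 1 ⟨m + 1, by omega⟩)
            (g := (γ m : ℝ)) (al := (α m : ℝ)) (be := (β m : ℝ))
            (g' := (γ' m : ℝ)) (al' := (α' m : ℝ)) (be' := (β' m : ℝ))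
            (by linarith) (by linarith [Ew, Ew']) (by linarith [Esq, Esq'])
            (by linarith [Ecu, Ecu']) hab hax hbx hβne
          exact ⟨⟨fun _ => Nat.cast_injective hg, Nat.cast_injective hal,
            Nat.cast_injective hbe⟩, hx⟩
        · have hm0 : m = 0 := by omega
          subst hm0
          rw [if_neg h1m] at Esq Esq' Ecu Ecu' Ew Ew'
          have hk0 : (α 0 : ℝ) + (β 0 : ℝ) = (k : ℝ) := by
            exact_mod_cast congrArg (Nat.cast : ℕ → ℝ) hrow0
          have hk0' : (α' 0 : ℝ) + (β' 0 : ℝ) = (k : ℝ) := by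
            exact_mod_cast congrArg (Nat.cast : ℕ → ℝ) hrow0'
          have hbx : u 1 ⟨0, by omega⟩ ≠ u 1 ⟨0 + 1, by omega⟩ := hnd1 0 (by omega)
          have hb1 := le_abs_self (u 1 ⟨0, by omega⟩)
          have hb2 := le_abs_self (u 1 ⟨0 + 1, by omega⟩)
          have hb3 := abs_nonneg (u 1 ⟨0, by omega⟩)
          have hb4 := abs_nonneg (u 1 ⟨0 + 1, by omega⟩)
          obtain ⟨hx, hg, hal, hbe⟩ := moment_unique
            (a := |u 1 ⟨0, by omega⟩| + |u 1 ⟨0 + 1, by omega⟩| + 1)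
            (b := u 1 ⟨0, by omega⟩)
            (x := u 1 ⟨0 + 1, by omega⟩) (x' := u' 1 ⟨0 + 1, by omega⟩)
            (g := 0) (al := (α 0 : ℝ)) (be := (β 0 : ℝ))
            (g' := 0) (al' := (α' 0 : ℝ)) (be' := (β' 0 : ℝ))
            (by linarith) (by linarith [Ew, Ew']) (by nlinarith [Esq, Esq'])
            (by nlinarith [Ecu, Ecu']) (by intro h; linarith) (by intro h; linarith)
            hbx hβne
          exact ⟨⟨fun h => absurd h (by omega), Nat.cast_injective hal,
            Nat.cast_injective hbe⟩, hx⟩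
      obtain ⟨hrowm, hwnext⟩ := hkey
      have hγr : 1 ≤ m → (γ m : ℝ) = (γ' m : ℝ) := fun h => by rw [hrowm.1 h]
      have hαr : (α m : ℝ) = (α' m : ℝ) := by rw [hrowm.2.1]
      have hβr : (β m : ℝ) = (β' m : ℝ) := by rw [hrowm.2.2]
      have hent : ∀ j, (lam j ≠ 0 ∨ tau j ≠ 0) →
          u j ⟨m + 1, by omega⟩ = u' j ⟨m + 1, by omega⟩ := by
        intro j hj
        refine propagate (hu j) ?_ m (by omega) hγr hαr hβr hβne
          (fun h => (hE (m - 1) (by omega)).2 j hj) ((hE m le_rfl).2 j hj)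
        rw [hmatch j hj]
        exact hu' j
      refine ⟨?_, ?_⟩
      · intro n hn
        rcases Nat.lt_or_ge n (m + 1) with h | h
        · exact hE n (by omega)
        · have hn1 : n = m + 1 := by omega
          subst hn1
          exact ⟨hwnext, hent⟩
      · intro n hn
        rcases Nat.lt_or_ge n m with h | h
        · exact hR n h
        · have hnm : n = m := by omega
          subst hnm
          exact hrowm
  obtain ⟨hEρ, hRρ⟩ := main ρ le_rfl
  have Ewρ := congrFun (hu 1) ⟨ρ, by omega⟩
  rw [quotRow γ α β (u 1) ρ le_rfl, dif_neg (by omega : ¬ρ + 1 ≤ ρ), if_pos (show 1 ≤ ρ by omega)] at Ewρ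
  have Ewρ' := congrFun (hu' 1) ⟨ρ, by omega⟩
  rw [quotRow γ' α' β' (u' 1) ρ le_rfl, dif_neg (by omega : ¬ρ + 1 ≤ ρ), if_pos (show 1 ≤ ρ by omega)] at Ewρ'
  simp only [Pi.smul_apply, smul_eq_mul] at Ewρ Ewρ'
  have hw1 : u' 1 ⟨ρ - 1, by omega⟩ = u 1 ⟨ρ - 1, by omega⟩ :=
    ((hEρ (ρ - 1) (by omega)).1).symm
  have hw2 : u' 1 ⟨ρ, by omega⟩ = u 1 ⟨ρ, by omega⟩ := ((hEρ ρ le_rfl).1).symm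
  rw [hw1, hw2, ← hη1] at Ewρ'
  have hk1 : (γ ρ : ℝ) + (α ρ : ℝ) = (k : ℝ) := by
    have h2 : γ ρ + α ρ = k := by have := hrow ρ hρpos le_rfl; omega
    exact_mod_cast congrArg (Nat.cast : ℕ → ℝ) h2
  have hk1' : (γ' ρ : ℝ) + (α' ρ : ℝ) = (k : ℝ) := by
    have h2 : γ' ρ + α' ρ = k := by have := hrow' ρ hρpos le_rfl; omega
    exact_mod_cast congrArg (Nat.cast : ℕ → ℝ) h2
  have hidx : (⟨ρ - 1 + 1, by omega⟩ : Fin (ρ + 1)) = ⟨ρ, by omega⟩ :=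
    Fin.ext (by simp; omega)
  have hab : u 1 ⟨ρ - 1, by omega⟩ ≠ u 1 ⟨ρ, by omega⟩ := by
    have := hnd1 (ρ - 1) (by omega)
    rwa [hidx] at this
  have hgρ : (γ ρ : ℝ) = (γ' ρ : ℝ) := by
    have h5 : ((γ ρ : ℝ) - (γ' ρ : ℝ)) *
        (u 1 ⟨ρ - 1, by omega⟩ - u 1 ⟨ρ, by omega⟩) = 0 := by
      linear_combination Ewρ - Ewρ' - u 1 ⟨ρ, by omega⟩ * hk1 + u 1 ⟨ρ, by omega⟩ * hk1'
    have := (mul_eq_zero.mp h5).resolve_right (sub_ne_zero.mpr hab)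
    linarith [sub_eq_zero.mp this]
  have hαρ : (α ρ : ℝ) = (α' ρ : ℝ) := by linarith
  refine ⟨?_, ?_, ?_⟩
  · intro i h1 h2
    rcases Nat.lt_or_ge i ρ with h | h
    · exact (hRρ i h).1 h1
    · have hiρ : i = ρ := by omega
      subst hiρ
      exact Nat.cast_injective hgρ
  · intro i hi
    rcases Nat.lt_or_ge i ρ with h | h
    · exact (hRρ i h).2.1
    · have hiρ : i = ρ := by omega
      subst hiρ
      exact Nat.cast_injective hαρ
  · intro i hi
    rcases Nat.lt_or_ge i ρ with h | h
    · exact (hRρ i h).2.2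
    · have hiρ : i = ρ := by omega
      subst hiρ
      rw [hβρ0, hβρ0']
end
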